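/- arXiv:1001.0448 — 2 statements merged into one kernel-verified Lean document; each statement's English description precedes it below -/
import Mathlib

section
/- Let k be a quasi-complete totally ordered rational tropical semifield and let α : M → N be an injective, lightly surjective homomorphism of k-modules such that M is straight and reflexive. Then α has a left-inversion, i.e. a homomorphism β : N → M of k-modules with β ∘ α = id_M. -/
/-! # Tropical semifields and tropical modules -/

/-- A tropical semifield: a commutative semiring with idempotent addition
(`⊕` is `+`, `⊙` is `*`, the zero element `−∞` is `0`, the unity is `1`)
in which every nonzero element has a multiplicative inverse. -/
class TropSemifield (k : Type*) extends CommSemiring k where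
  add_idem : ∀ a : k, a + a = a
  exists_inv : ∀ a : k, a ≠ 0 → ∃ b : k, a * b = 1

/-- A tropical semigroup: commutative idempotent monoid, written additively
(the zero element is `−∞`). -/
class TropSemigroup (M : Type*) extends AddCommMonoid M where
  add_idem : ∀ v : M, v + v = v

/-- A module over a tropical semifield. -/
class TropModule (k : Type*) (M : Type*) [TropSemifield k] [TropSemigroup M] extends
    SMul k M where
  mul_smul : ∀ (a b : k) (v : M), (a * b) • v = a • b • v
  one_smul : ∀ v : M, (1 : k) • v = v
  add_smul : ∀ (a b : k) (v : M), (a + b) • v = a • v + b • v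
  smul_add : ∀ (a : k) (v w : M), a • (v + w) = a • v + a • w
  zero_smul : ∀ v : M, (0 : k) • v = 0
  smul_zero : ∀ a : k, a • (0 : M) = 0

/-- The canonical partial order `v ≤ w ↔ v ⊕ w = w`. -/
def tle {M : Type*} [Add M] (v w : M) : Prop := v + w = w

/-- Strict version of the canonical order. -/
def tlt {M : Type*} [Add M] (v w : M) : Prop := tle v w ∧ v ≠ w

/-- The canonical order of `k` is total. -/
def TotallyOrderedTSF (k : Type*) [TropSemifield k] : Prop :=
  ∀ a b : k, tle a b ∨ tle b a

/-- Every nonempty subset of `k` admits an infimum. -/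
def QuasiCompleteTSF (k : Type*) [TropSemifield k] : Prop :=
  ∀ S : Set k, S.Nonempty →
    ∃ c : k, (∀ x ∈ S, tle c x) ∧ ∀ d : k, (∀ x ∈ S, tle d x) → tle d c

/-- `k` is rational: `m`-th roots exist and `k` has no maximum element. -/
def RationalTSF (k : Type*) [TropSemifield k] : Prop :=
  (∀ (a : k) (m : ℕ), m ≠ 0 → ∃ b : k, b ^ m = a) ∧ ∀ a : k, ∃ b : k, tlt a b

instance (priority := 100) TropSemifield.toTropSemigroup (k : Type*) [TropSemifield k] :
    TropSemigroup k :=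
  { (inferInstance : AddCommMonoid k) with add_idem := TropSemifield.add_idem }

instance TropModule.self (k : Type*) [TropSemifield k] : TropModule k k :=
  { (inferInstance : SMul k k) with
    mul_smul := fun a b v => mul_assoc a b v
    one_smul := fun v => one_mul v
    add_smul := fun a b v => add_mul a b v
    smul_add := fun a v w => mul_add a v w
    zero_smul := fun v => zero_mul v
    smul_zero := fun a => mul_zero a }

instance TropSemigroup.pi {ι : Type*} (M : Type*) [TropSemigroup M] :
    TropSemigroup (ι → M) :=
  { Pi.addCommMonoid with add_idem := fun v => funext fun i => TropSemigroup.add_idem (v i) }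

instance TropModule.pi (k : Type*) {ι : Type*} (M : Type*) [TropSemifield k] [TropSemigroup M]
    [TropModule k M] : TropModule k (ι → M) where
  smul a v := fun i => a • v i
  mul_smul a b v := funext fun i => TropModule.mul_smul a b (v i)
  one_smul v := funext fun i => TropModule.one_smul (v i)
  add_smul a b v := funext fun i => TropModule.add_smul a b (v i)
  smul_add a v w := funext fun i => TropModule.smul_add a (v i) (w i)
  zero_smul v := funext fun i => TropModule.zero_smul (v i)
  smul_zero a := funext fun i => TropModule.smul_zero (a := a)

/-! ## Homomorphisms of tropical modules -/

/-- A homomorphism of `k`-modules. -/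
structure TropHom (k : Type*) (M : Type*) (N : Type*) [TropSemifield k] [TropSemigroup M]
    [TropModule k M] [TropSemigroup N] [TropModule k N] where
  toFun : M → N
  map_zero' : toFun 0 = 0
  map_add' : ∀ v w : M, toFun (v + w) = toFun v + toFun w
  map_smul' : ∀ (a : k) (v : M), toFun (a • v) = a • toFun v

namespace TropHom

variable {k M N : Type*} [TropSemifield k] [TropSemigroup M] [TropModule k M]
  [TropSemigroup N] [TropModule k N]

theorem ext' {f g : TropHom k M N} (h : ∀ v, f.toFun v = g.toFun v) : f = g := by
  cases f; cases g
  simp only [mk.injEq]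
  exact funext h

instance : Zero (TropHom k M N) :=
  ⟨⟨fun _ => 0, rfl, fun _ _ => (add_zero (0 : N)).symm,
    fun a _ => (TropModule.smul_zero (M := N) a).symm⟩⟩

instance : Add (TropHom k M N) :=
  ⟨fun f g =>
    { toFun := fun v => f.toFun v + g.toFun v
      map_zero' := by
        show f.toFun 0 + g.toFun 0 = 0
        rw [f.map_zero', g.map_zero', add_zero]
      map_add' := fun v w => by
        show f.toFun (v + w) + g.toFun (v + w) =
          (f.toFun v + g.toFun v) + (f.toFun w + g.toFun w)
        rw [f.map_add', g.map_add', add_add_add_comm]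
      map_smul' := fun a v => by
        show f.toFun (a • v) + g.toFun (a • v) = a • (f.toFun v + g.toFun v)
        rw [f.map_smul', g.map_smul', TropModule.smul_add] }⟩

instance : SMul k (TropHom k M N) :=
  ⟨fun a f =>
    { toFun := fun v => a • f.toFun v
      map_zero' := by
        show a • f.toFun 0 = 0
        rw [f.map_zero', TropModule.smul_zero]
      map_add' := fun v w => by
        show a • f.toFun (v + w) = a • f.toFun v + a • f.toFun w
        rw [f.map_add', TropModule.smul_add]
      map_smul' := fun b v => by
        show a • f.toFun (b • v) = b • (a • f.toFun v)
        rw [f.map_smul', ← TropModule.mul_smul, ← TropModule.mul_smul, mul_comm a b] }⟩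

instance : TropSemigroup (TropHom k M N) where
  add := (· + ·)
  zero := 0
  add_assoc f g h := ext' fun v => add_assoc (f.toFun v) (g.toFun v) (h.toFun v)
  zero_add f := ext' fun v => zero_add (f.toFun v)
  add_zero f := ext' fun v => add_zero (f.toFun v)
  add_comm f g := ext' fun v => add_comm (f.toFun v) (g.toFun v)
  nsmul := nsmulRec
  add_idem f := ext' fun v => TropSemigroup.add_idem (f.toFun v)

instance : TropModule k (TropHom k M N) where
  smul := (· • ·)
  mul_smul a b f := ext' fun v => TropModule.mul_smul a b (f.toFun v)
  one_smul f := ext' fun v => TropModule.one_smul (f.toFun v)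
  add_smul a b f := ext' fun v => TropModule.add_smul a b (f.toFun v)
  smul_add a f g := ext' fun v => TropModule.smul_add a (f.toFun v) (g.toFun v)
  zero_smul f := ext' fun v => TropModule.zero_smul (f.toFun v)
  smul_zero a := ext' fun v => TropModule.smul_zero (M := N) a

end TropHom

/-- The canonical map `M → (M∨)∨`, `v ↦ (ξ ↦ ⟨v, ξ⟩)`. -/
def iotaFun (k : Type*) (M : Type*) [TropSemifield k] [TropSemigroup M] [TropModule k M] :
    M → TropHom k (TropHom k M k) k :=
  fun v => ⟨fun ξ => ξ.toFun v, rfl, fun ξ η => rfl, fun a ξ => rfl⟩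

/-! ## Order-theoretic notions -/

/-- `z` is the infimum of `v` and `w` w.r.t. the canonical order. -/
def IsTInf {M : Type*} [Add M] (v w z : M) : Prop :=
  tle z v ∧ tle z w ∧ ∀ y : M, tle y v → tle y w → tle y z

/-- A tropical module is straight if it is a finitely distributive ordered lattice. -/
def Straight (M : Type*) [Add M] : Prop :=
  (∀ v w : M, ∃ z : M, IsTInf v w z) ∧
    ∀ v₁ v₂ w z₁ z₂ : M, IsTInf v₁ w z₁ → IsTInf v₂ w z₂ → IsTInf (v₁ + v₂) w (z₁ + z₂)

/-- Infimum of `v` and `w` within the subset `N`. -/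
def IsTInfOn {M : Type*} [Add M] (N : Set M) (v w z : M) : Prop :=
  tle z v ∧ tle z w ∧ ∀ y ∈ N, tle y v → tle y w → tle y z

/-- A submodule (viewed as a subset) is straight. -/
def StraightSet {M : Type*} [Add M] (N : Set M) : Prop :=
  (∀ v ∈ N, ∀ w ∈ N, ∃ z ∈ N, IsTInfOn N v w z) ∧
    ∀ v₁ ∈ N, ∀ v₂ ∈ N, ∀ w ∈ N, ∀ z₁ ∈ N, ∀ z₂ ∈ N,
      IsTInfOn N v₁ w z₁ → IsTInfOn N v₂ w z₂ → IsTInfOn N (v₁ + v₂) w (z₁ + z₂)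

/-! ## Generation, bases, extremal elements -/

/-- `S` generates the `k`-module `M`. -/
def TGenerates (k : Type*) {M : Type*} [TropSemifield k] [TropSemigroup M] [TropModule k M]
    (S : Set M) : Prop :=
  ∀ v : M, ∃ (r : ℕ) (a : Fin r → k) (x : Fin r → M), (∀ i, x i ∈ S) ∧ v = ∑ i, a i • x i

/-- `M` is finitely generated. -/
def TFG (k : Type*) (M : Type*) [TropSemifield k] [TropSemigroup M] [TropModule k M] : Prop :=
  ∃ S : Finset M, TGenerates k (↑S : Set M)

/-- A basis: a generating set no proper subset of which generates. -/
def TBasis (k : Type*) {M : Type*} [TropSemifield k] [TropSemigroup M] [TropModule k M]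
    (S : Set M) : Prop :=
  TGenerates k S ∧ ∀ T : Set M, T ⊂ S → ¬ TGenerates k T

/-- `S` generates the subset `N` (viewed as a submodule of `M`). -/
def TGeneratesOn (k : Type*) {M : Type*} [TropSemifield k] [TropSemigroup M] [TropModule k M]
    (N S : Set M) : Prop :=
  ∀ v ∈ N, ∃ (r : ℕ) (a : Fin r → k) (x : Fin r → M), (∀ i, x i ∈ S) ∧ v = ∑ i, a i • x i

/-- A basis of the submodule `N ⊆ M`. -/
def TBasisOn (k : Type*) {M : Type*} [TropSemifield k] [TropSemigroup M] [TropModule k M]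
    (N S : Set M) : Prop :=
  S ⊆ N ∧ TGeneratesOn k N S ∧ ∀ T : Set M, T ⊂ S → ¬ TGeneratesOn k N T

/-- An extremal element. -/
def TExtremal {M : Type*} [Add M] [Zero M] (e : M) : Prop :=
  e ≠ 0 ∧ ∀ v w : M, v + w = e → v = e ∨ w = e

/-- The ray `k ⊙ e` generated by an element. -/
def tray (k : Type*) {M : Type*} [TropSemifield k] [TropSemigroup M] [TropModule k M]
    (e : M) : Set M :=
  Set.range fun a : k => a • e

/-- The set of extremal rays of `M`. -/
def extRays (k : Type*) (M : Type*) [TropSemifield k] [TropSemigroup M] [TropModule k M] :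
    Set (Set M) :=
  {R : Set M | ∃ e : M, TExtremal e ∧ R = tray k e}

/-- The dimension of a straight reflexive module: the number of extremal rays. -/
noncomputable def tdim (k : Type*) (M : Type*) [TropSemifield k] [TropSemigroup M]
    [TropModule k M] : ℕ :=
  (extRays k M).ncard

/-! ## Further notions on homomorphisms -/

/-- A lightly surjective homomorphism. -/
def LightlySurjective {k M N : Type*} [TropSemifield k] [TropSemigroup M] [TropModule k M]
    [TropSemigroup N] [TropModule k N] (α : TropHom k M N) : Prop :=
  ∀ w : N, ∃ v : M, tle w (α.toFun v)

/-- A lattice-preserving homomorphism. -/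
def LatticePreserving {k M N : Type*} [TropSemifield k] [TropSemigroup M] [TropModule k M]
    [TropSemigroup N] [TropModule k N] (α : TropHom k M N) : Prop :=
  ∀ v w : M, ∀ x : N, tle x (α.toFun v) → tle x (α.toFun w) →
    ∃ y : M, tle y v ∧ tle y w ∧ tle x (α.toFun y)

/-- The inclusion of the subset `N` into the ambient module is lattice-preserving. -/
def LatPresSet {M : Type*} [Add M] (N : Set M) : Prop :=
  ∀ v ∈ N, ∀ w ∈ N, ∀ x : M, tle x v → tle x w → ∃ y ∈ N, tle y v ∧ tle y w ∧ tle x y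

/-- `η` is the dual element of `e`: `⟨e,η⟩ = 0` and
`⟨v,η⟩ ⊙ ⟨e,ξ⟩ ≤ ⟨v,ξ⟩` for all `v`, `ξ`. -/
def IsDualElement {k M : Type*} [TropSemifield k] [TropSemigroup M] [TropModule k M]
    (e : M) (η : TropHom k M k) : Prop :=
  η.toFun e = 1 ∧ ∀ (v : M) (ξ : TropHom k M k), tle (η.toFun v * ξ.toFun e) (ξ.toFun v)

/-! ## Locators -/

/-- A locator of `M`: a lower-saturated subsemigroup of `(M, ⊕)` that generates `M`. -/
structure IsLocator (k : Type*) {M : Type*} [TropSemifield k] [TropSemigroup M] [TropModule k M]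
    (S : Set M) : Prop where
  lower : ∀ v w : M, tle v w → w ∈ S → v ∈ S
  add_mem : ∀ v ∈ S, ∀ w ∈ S, v + w ∈ S
  generates : TGenerates k S

/-- The multiplicative inverse `⊘a` (junk value `−∞` at `−∞`). -/
noncomputable def tinv {k : Type*} [TropSemifield k] (a : k) : k := by
  classical exact if h : a = 0 then 0 else Classical.choose (TropSemifield.exists_inv a h)

/-- Scalar multiplication on locators: `a ⊙̌ S = (⊘a) ⊙ S` for `a ≠ −∞`, `(−∞) ⊙̌ S = M`. -/
noncomputable def locSMul {k M : Type*} [TropSemifield k] [TropSemigroup M] [TropModule k M]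
    (a : k) (S : Set M) : Set M := by
  classical exact if a = 0 then Set.univ else (fun v => tinv a • v) '' S

/-- `U` is the infimum of the locators `S`, `T` in `Loc(M)` (whose canonical
order is reverse inclusion, the sum being intersection). -/
def IsLocInf (k : Type*) {M : Type*} [TropSemifield k] [TropSemigroup M] [TropModule k M]
    (S T U : Set M) : Prop :=
  IsLocator k U ∧ S ⊆ U ∧ T ⊆ U ∧
    ∀ W : Set M, IsLocator k W → S ⊆ W → T ⊆ W → U ⊆ W

/-! ## Submodules -/

/-- A subset of a `k`-module which is a submodule. -/
structure IsTSubmodule (k : Type*) {M : Type*} [TropSemifield k] [TropSemigroup M]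
    [TropModule k M] (N : Set M) : Prop where
  zero_mem : (0 : M) ∈ N
  add_mem : ∀ v ∈ N, ∀ w ∈ N, v + w ∈ N
  smul_mem : ∀ (a : k), ∀ v ∈ N, a • v ∈ N

/-- A bundled submodule of a `k`-module. -/
structure TSub (k : Type*) (M : Type*) [TropSemifield k] [TropSemigroup M] [TropModule k M] where
  carrier : Set M
  zero_mem : (0 : M) ∈ carrier
  add_mem : ∀ v ∈ carrier, ∀ w ∈ carrier, v + w ∈ carrier
  smul_mem : ∀ (a : k), ∀ v ∈ carrier, a • v ∈ carrier

instance TSub.instZero {k M : Type*} [TropSemifield k] [TropSemigroup M] [TropModule k M]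
    (N : TSub k M) : Zero ↥N.carrier :=
  ⟨⟨0, N.zero_mem⟩⟩

instance TSub.instAdd {k M : Type*} [TropSemifield k] [TropSemigroup M] [TropModule k M]
    (N : TSub k M) : Add ↥N.carrier :=
  ⟨fun v w => ⟨v.1 + w.1, N.add_mem v.1 v.2 w.1 w.2⟩⟩

instance TSub.instSMul {k M : Type*} [TropSemifield k] [TropSemigroup M] [TropModule k M]
    (N : TSub k M) : SMul k ↥N.carrier :=
  ⟨fun a v => ⟨a • v.1, N.smul_mem a v.1 v.2⟩⟩

instance TSub.semigroup {k M : Type*} [TropSemifield k] [TropSemigroup M] [TropModule k M]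
    (N : TSub k M) : TropSemigroup ↥N.carrier where
  add := (· + ·)
  zero := 0
  add_assoc a b c := Subtype.ext (add_assoc a.1 b.1 c.1)
  zero_add a := Subtype.ext (zero_add a.1)
  add_zero a := Subtype.ext (add_zero a.1)
  add_comm a b := Subtype.ext (add_comm a.1 b.1)
  nsmul := nsmulRec
  add_idem a := Subtype.ext (TropSemigroup.add_idem a.1)

instance TSub.module {k M : Type*} [TropSemifield k] [TropSemigroup M] [TropModule k M]
    (N : TSub k M) : TropModule k ↥N.carrier where
  smul := (· • ·)
  mul_smul a b v := Subtype.ext (TropModule.mul_smul a b v.1)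
  one_smul v := Subtype.ext (TropModule.one_smul v.1)
  add_smul a b v := Subtype.ext (TropModule.add_smul a b v.1)
  smul_add a v w := Subtype.ext (TropModule.smul_add a v.1 w.1)
  zero_smul v := Subtype.ext (TropModule.zero_smul v.1)
  smul_zero a := Subtype.ext (TropModule.smul_zero (M := M) a)

/-! ## Linear combinations -/

theorem tsmul_sum {k M : Type*} [TropSemifield k] [TropSemigroup M] [TropModule k M]
    (a : k) {ι : Type*} (s : Finset ι) (f : ι → M) :
    a • (∑ i ∈ s, f i) = ∑ i ∈ s, a • f i := by
  classical
  induction s using Finset.induction_on with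
  | empty => simpa using TropModule.smul_zero (M := M) a
  | insert _ _ h ih => rw [Finset.sum_insert h, Finset.sum_insert h, TropModule.smul_add, ih]

/-- The homomorphism `kⁿ → M` sending the `i`-th standard basis element to `e i`. -/
def linComb {k M : Type*} [TropSemifield k] [TropSemigroup M] [TropModule k M] {n : ℕ}
    (e : Fin n → M) : TropHom k (Fin n → k) M where
  toFun v := ∑ i, v i • e i
  map_zero' :=
    (Finset.sum_congr rfl fun i _ => TropModule.zero_smul (e i)).trans Finset.sum_const_zero
  map_add' v w := by
    rw [← Finset.sum_add_distrib]
    exact Finset.sum_congr rfl fun i _ => TropModule.add_smul (v i) (w i) (e i)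
  map_smul' a v := by
    rw [tsmul_sum]
    exact Finset.sum_congr rfl fun i _ => TropModule.mul_smul a (v i) (e i)

/-- The homomorphism `M → kⁿ` induced by an `n`-tuple of elements of `M∨`. -/
def dualTuple {k M : Type*} [TropSemifield k] [TropSemigroup M] [TropModule k M] {n : ℕ}
    (η : Fin n → TropHom k M k) : TropHom k M (Fin n → k) where
  toFun v := fun i => (η i).toFun v
  map_zero' := funext fun i => (η i).map_zero'
  map_add' v w := funext fun i => (η i).map_add' v w
  map_smul' a v := funext fun i => (η i).map_smul' a v

/-! ## Auxiliary order-theoretic lemmas for the proof of Statement 1 -/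

namespace TropAux

theorem tle_refl {G : Type*} [TropSemigroup G] (v : G) : tle v v :=
  TropSemigroup.add_idem v

theorem tle_trans {G : Type*} [TropSemigroup G] {u v w : G} (h1 : tle u v) (h2 : tle v w) :
    tle u w := by
  unfold tle at *
  rw [← h2, ← add_assoc, h1]

theorem tle_antisymm {G : Type*} [TropSemigroup G] {v w : G} (h1 : tle v w) (h2 : tle w v) :
    v = w := by
  unfold tle at *
  rw [← h1, add_comm, h2]

theorem tle_add {G : Type*} [TropSemigroup G] {a b c d : G} (h1 : tle a b) (h2 : tle c d) :
    tle (a + c) (b + d) := by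
  unfold tle at *
  rw [add_add_add_comm, h1, h2]

theorem tle_add_left {G : Type*} [TropSemigroup G] (a b : G) : tle a (a + b) := by
  unfold tle
  rw [← add_assoc, TropSemigroup.add_idem]

theorem tle_add_right {G : Type*} [TropSemigroup G] (a b : G) : tle b (a + b) := by
  rw [add_comm]
  exact tle_add_left b a

theorem tle_bot {G : Type*} [TropSemigroup G] (v : G) : tle (0 : G) v := zero_add v

theorem tle_mul {k : Type*} [TropSemifield k] {a b : k} (c : k) (h : tle a b) :
    tle (a * c) (b * c) := by
  unfold tle at *
  rw [← add_mul, h]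

theorem tle_mul_left {k : Type*} [TropSemifield k] (c : k) {a b : k} (h : tle a b) :
    tle (c * a) (c * b) := by
  unfold tle at *
  rw [← mul_add, h]

theorem mul_tinv {k : Type*} [TropSemifield k] {a : k} (h : a ≠ 0) : a * tinv a = 1 := by
  unfold tinv
  rw [dif_neg h]
  exact Classical.choose_spec (TropSemifield.exists_inv a h)

theorem tle_smul {k M : Type*} [TropSemifield k] [TropSemigroup M] [TropModule k M]
    (a : k) {v w : M} (h : tle v w) : tle (a • v) (a • w) := by
  unfold tle at *
  rw [← TropModule.smul_add, h]

theorem hom_mono {k M N : Type*} [TropSemifield k] [TropSemigroup M] [TropModule k M]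
    [TropSemigroup N] [TropModule k N] (f : TropHom k M N) {v w : M} (h : tle v w) :
    tle (f.toFun v) (f.toFun w) := by
  unfold tle at *
  rw [← f.map_add', h]

/-- Closure of a set under binary infima. -/
inductive MeetCl {M : Type*} [Add M] (V : Set M) : M → Prop
  | base {x : M} : x ∈ V → MeetCl V x
  | meet {y y' z : M} : MeetCl V y → MeetCl V y' → IsTInf y y' z → MeetCl V z

end TropAux

open TropAux

theorem stmt1 {k M N : Type*} [TropSemifield k] [TropSemigroup M] [TropModule k M]
    [TropSemigroup N] [TropModule k N]
    (hto : TotallyOrderedTSF k) (hqc : QuasiCompleteTSF k) (hrat : RationalTSF k)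
    (α : TropHom k M N) (hinj : Function.Injective α.toFun)
    (hlight : LightlySurjective α) (hstraight : Straight M)
    (hrefl : Function.Bijective (iotaFun k M)) :
    ∃ β : TropHom k N M, ∀ v : M, β.toFun (α.toFun v) = v := by
  classical
  clear hrat
  obtain ⟨ι_inj, ι_surj⟩ := hrefl
  choose meetF hmeet using hstraight.1
  have hdist := hstraight.2
  -- total-order helper
  have hadd_or : ∀ a b : k, a + b = b ∨ a + b = a := by
    intro a b
    rcases hto a b with h | h
    · exact Or.inl h
    · exact Or.inr (by rw [add_comm]; exact h)
  -- infimum interface lemma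
  have lemA : ∀ (z c A : k) (P : k → Prop),
      (∀ d : k, (∀ s, P s → tle d s) → tle d A) →
      (∀ s, P s → tle z (c + s)) → tle z (c + A) := by
    intro z c A P hglb h
    by_cases hall : ∀ s, P s → tle z s
    · exact tle_trans (hglb z hall) (tle_add_right c A)
    · push_neg at hall
      obtain ⟨s, hs, hzs⟩ := hall
      rcases hadd_or c s with hcs | hcs
      · exact absurd (by have h' := h s hs; rwa [hcs] at h') hzs
      · have h' := h s hs
        rw [hcs] at h'
        exact tle_trans h' (tle_add_left c A)
  have lemA' : ∀ (z c A : k) (P : k → Prop),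
      (∀ d : k, (∀ s, P s → tle d s) → tle d A) →
      (∀ s, P s → tle z (s + c)) → tle z (A + c) := by
    intro z c A P hglb h
    rw [add_comm]
    exact lemA z c A P hglb fun s hs => by rw [add_comm]; exact h s hs
  -- suprema exist for nonempty bounded sets
  have supEx : ∀ S : Set k, S.Nonempty → ∀ b : k, (∀ x ∈ S, tle x b) →
      ∃ c : k, (∀ x ∈ S, tle x c) ∧ ∀ d : k, (∀ x ∈ S, tle x d) → tle c d := by
    intro S hS b hb
    obtain ⟨c, hc1, hc2⟩ := hqc {u : k | ∀ x ∈ S, tle x u} ⟨b, hb⟩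
    exact ⟨c, fun x hx => hc2 x fun u hu => hu x hx, fun d hd => hc1 d hd⟩
  -- the functional φ_w(ξ) = inf { ξ(u) : w ≤ α(u) }
  have phiEx : ∀ (w : N) (ξ : TropHom k M k), ∃ c : k,
      (∀ u : M, tle w (α.toFun u) → tle c (ξ.toFun u)) ∧
      ∀ d : k, (∀ u : M, tle w (α.toFun u) → tle d (ξ.toFun u)) → tle d c := by
    intro w ξ
    obtain ⟨u0, hu0⟩ := hlight w
    obtain ⟨c, h1, h2⟩ := hqc (ξ.toFun '' {u : M | tle w (α.toFun u)})
      ⟨ξ.toFun u0, ⟨u0, hu0, rfl⟩⟩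
    refine ⟨c, fun u hu => h1 _ ⟨u, hu, rfl⟩, fun d hd => h2 d ?_⟩
    rintro t ⟨u, hu, rfl⟩
    exact hd u hu
  choose phi phi_lb phi_glb using phiEx
  -- B_w(ζ) = sup { ζ(x) : ∀ ξ, ξ(x) ≤ φ_w(ξ) }
  have BEx : ∀ (w : N) (ζ : TropHom k M k), ∃ c : k,
      (∀ x : M, (∀ ξ : TropHom k M k, tle (ξ.toFun x) (phi w ξ)) → tle (ζ.toFun x) c) ∧
      ∀ d : k, (∀ x : M, (∀ ξ : TropHom k M k, tle (ξ.toFun x) (phi w ξ)) →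
        tle (ζ.toFun x) d) → tle c d := by
    intro w ζ
    have h0 : ∀ ξ : TropHom k M k, tle (ξ.toFun (0 : M)) (phi w ξ) := by
      intro ξ
      rw [ξ.map_zero']
      exact tle_bot _
    obtain ⟨c, h1, h2⟩ := supEx
      (ζ.toFun '' {x : M | ∀ ξ : TropHom k M k, tle (ξ.toFun x) (phi w ξ)})
      ⟨ζ.toFun 0, ⟨0, h0, rfl⟩⟩ (phi w ζ) (by rintro t ⟨x, hx, rfl⟩; exact hx ζ)
    refine ⟨c, fun x hx => h1 _ ⟨x, hx, rfl⟩, fun d hd => h2 d ?_⟩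
    rintro t ⟨x, hx, rfl⟩
    exact hd x hx
  choose Bf B_ub B_lub using BEx
  -- reflexivity tools
  have ι_eq : ∀ {v v' : M}, (∀ ζ : TropHom k M k, ζ.toFun v = ζ.toFun v') → v = v' := by
    intro v v' h
    exact ι_inj (TropHom.ext' fun ζ => h ζ)
  have ord_refl : ∀ {x y : M}, (∀ ξ : TropHom k M k, tle (ξ.toFun x) (ξ.toFun y)) →
      tle x y := by
    intro x y h
    have hxy : iotaFun k M (x + y) = iotaFun k M y :=
      TropHom.ext' fun ξ => by
        show ξ.toFun (x + y) = ξ.toFun y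
        rw [ξ.map_add']
        exact h ξ
    exact ι_inj hxy
  have orα : ∀ {v u : M}, tle (α.toFun v) (α.toFun u) → tle v u := by
    intro v u h
    have : α.toFun (v + u) = α.toFun u := by rw [α.map_add']; exact h
    exact hinj this
  -- distributivity consequences
  have C1 : ∀ v₁ v₂ p : M, tle p (v₁ + v₂) → p = meetF v₁ p + meetF v₂ p := by
    intro v₁ v₂ p hp
    have h := hdist v₁ v₂ p (meetF v₁ p) (meetF v₂ p) (hmeet v₁ p) (hmeet v₂ p)
    exact tle_antisymm (h.2.2 p hp (tle_refl p)) h.2.1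
  have C2 : ∀ c a b x z : M, tle x (c + a) → tle x (c + b) → IsTInf a b z →
      tle x (c + z) := by
    intro c a b x z h1 h2 hz
    have hm := hmeet (c + a) (c + b)
    have hxm : tle x (meetF (c + a) (c + b)) := hm.2.2 x h1 h2
    have e1 : meetF (c + a) (c + b) =
        meetF c (meetF (c + a) (c + b)) + meetF a (meetF (c + a) (c + b)) :=
      C1 c a _ hm.1
    have hpa : tle (meetF a (meetF (c + a) (c + b))) a := (hmeet a _).1
    have hpcb : tle (meetF a (meetF (c + a) (c + b))) (c + b) :=
      tle_trans (hmeet a _).2.1 hm.2.1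
    have e2 : meetF a (meetF (c + a) (c + b)) =
        meetF c (meetF a (meetF (c + a) (c + b))) +
          meetF b (meetF a (meetF (c + a) (c + b))) :=
      C1 c b _ hpcb
    have hbz : tle (meetF b (meetF a (meetF (c + a) (c + b)))) z :=
      hz.2.2 _ (tle_trans (hmeet b _).2.1 hpa) (hmeet b _).1
    have hpz : tle (meetF a (meetF (c + a) (c + b))) (c + z) := by
      have h3 := tle_add (hmeet c (meetF a (meetF (c + a) (c + b)))).1 hbz
      rw [← e2] at h3
      exact h3
    have hmz : tle (meetF (c + a) (c + b)) (c + z) := by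
      have h3 : tle (meetF c (meetF (c + a) (c + b))) (c + z) :=
        tle_trans (hmeet c (meetF (c + a) (c + b))).1 (tle_add_left c z)
      have h4 := tle_add h3 hpz
      rw [← e1] at h4
      rwa [TropSemigroup.add_idem] at h4
    exact tle_trans hxm hmz
  have C2' : ∀ a b c x z : M, tle x (a + c) → tle x (b + c) → IsTInf a b z →
      tle x (z + c) := by
    intro a b c x z h1 h2 hz
    rw [add_comm a c] at h1
    rw [add_comm b c] at h2
    have h3 := C2 c a b x z h1 h2 hz
    rwa [add_comm c z] at h3
  -- monotonicity of S_w in w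
  have Ssub : ∀ (w₁ w₂ : N) (x : M), (∀ ξ : TropHom k M k, tle (ξ.toFun x) (phi w₁ ξ)) →
      ∀ ξ : TropHom k M k, tle (ξ.toFun x) (phi (w₁ + w₂) ξ) := by
    intro w₁ w₂ x hx ξ
    refine tle_trans (hx ξ) (phi_glb (w₁ + w₂) ξ (phi w₁ ξ) ?_)
    intro u hu
    exact phi_lb w₁ ξ u (tle_trans (tle_add_left w₁ w₂) hu)
  have Ssub' : ∀ (w₁ w₂ : N) (x : M), (∀ ξ : TropHom k M k, tle (ξ.toFun x) (phi w₂ ξ)) →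
      ∀ ξ : TropHom k M k, tle (ξ.toFun x) (phi (w₁ + w₂) ξ) := by
    intro w₁ w₂ x hx ξ
    refine tle_trans (hx ξ) (phi_glb (w₁ + w₂) ξ (phi w₂ ξ) ?_)
    intro u hu
    exact phi_lb w₂ ξ u (tle_trans (tle_add_right w₁ w₂) hu)
  -- the key additivity estimate
  have key : ∀ (w₁ w₂ : N) (ζ : TropHom k M k) (x : M),
      (∀ ξ : TropHom k M k, tle (ξ.toFun x) (phi (w₁ + w₂) ξ)) →
      tle (ζ.toFun x) (Bf w₁ ζ + Bf w₂ ζ) := by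
    intro w₁ w₂ ζ x hx
    have hbase : ∀ u₁ : M, tle w₁ (α.toFun u₁) → ∀ u₂ : M, tle w₂ (α.toFun u₂) →
        tle x (u₁ + u₂) := by
      intro u₁ hu₁ u₂ hu₂
      refine ord_refl fun ξ => ?_
      refine tle_trans (hx ξ) (phi_lb (w₁ + w₂) ξ (u₁ + u₂) ?_)
      rw [α.map_add']
      exact tle_add hu₁ hu₂
    have hstep1 : ∀ u₁ : M, tle w₁ (α.toFun u₁) →
        ∀ y₂ : M, MeetCl {u : M | tle w₂ (α.toFun u)} y₂ → tle x (u₁ + y₂) := by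
      intro u₁ hu₁ y₂ hy₂
      induction hy₂ with
      | base h => exact hbase u₁ hu₁ _ h
      | meet h h' hz ih ih' => exact C2 u₁ _ _ x _ ih ih' hz
    have hall : ∀ y₁ : M, MeetCl {u : M | tle w₁ (α.toFun u)} y₁ →
        ∀ y₂ : M, MeetCl {u : M | tle w₂ (α.toFun u)} y₂ → tle x (y₁ + y₂) := by
      intro y₁ hy₁
      induction hy₁ with
      | base h => exact fun y₂ hy₂ => hstep1 _ h y₂ hy₂
      | meet h h' hz ih ih' =>
        intro y₂ hy₂
        exact C2' _ _ y₂ x _ (ih y₂ hy₂) (ih' y₂ hy₂) hz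
    -- construction of the auxiliary element x_i for a given w'
    have hXi : ∀ w' : N, ∃ xi : M,
        (∀ (ξ : TropHom k M k) (y : M), MeetCl {u : M | tle w' (α.toFun u)} y →
          tle (ξ.toFun xi) (ξ.toFun (meetF y x))) ∧
        ∀ (ξ : TropHom k M k) (d : k),
          (∀ y : M, MeetCl {u : M | tle w' (α.toFun u)} y →
            tle d (ξ.toFun (meetF y x))) → tle d (ξ.toFun xi) := by
      intro w'
      obtain ⟨u0, hu0⟩ := hlight w'
      have hmono : ∀ (ξ : TropHom k M k) (y y' : M), tle y y' →
          tle (ξ.toFun (meetF y x)) (ξ.toFun (meetF y' x)) := by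
        intro ξ y y' hyy
        exact hom_mono ξ
          ((hmeet y' x).2.2 _ (tle_trans (hmeet y x).1 hyy) (hmeet y x).2.1)
      have IEx : ∀ ξ : TropHom k M k, ∃ c : k,
          (∀ y : M, MeetCl {u : M | tle w' (α.toFun u)} y →
            tle c (ξ.toFun (meetF y x))) ∧
          ∀ d : k, (∀ y : M, MeetCl {u : M | tle w' (α.toFun u)} y →
            tle d (ξ.toFun (meetF y x))) → tle d c := by
        intro ξ
        obtain ⟨c, h1, h2⟩ := hqc
          {s : k | ∃ y : M, MeetCl {u : M | tle w' (α.toFun u)} y ∧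
            s = ξ.toFun (meetF y x)}
          ⟨ξ.toFun (meetF u0 x), u0, MeetCl.base hu0, rfl⟩
        refine ⟨c, fun y hy => h1 _ ⟨y, hy, rfl⟩, fun d hd => h2 d ?_⟩
        rintro s ⟨y, hy, rfl⟩
        exact hd y hy
      choose I I_lb I_glb using IEx
      have Iglb' : ∀ (ξ : TropHom k M k) (d : k),
          (∀ s, (∃ y : M, MeetCl {u : M | tle w' (α.toFun u)} y ∧
            s = ξ.toFun (meetF y x)) → tle d s) → tle d (I ξ) := by
        intro ξ d hd
        exact I_glb ξ d fun y hy => hd _ ⟨y, hy, rfl⟩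
      have hzero : I 0 = 0 := by
        apply tle_antisymm
        · exact I_lb 0 u0 (MeetCl.base hu0)
        · exact tle_bot _
      have hadd : ∀ ξ ξ' : TropHom k M k, I (ξ + ξ') = I ξ + I ξ' := by
        intro ξ ξ'
        apply tle_antisymm
        · have st1 : ∀ y : M, MeetCl {u : M | tle w' (α.toFun u)} y →
              tle (I (ξ + ξ')) (ξ.toFun (meetF y x) + I ξ') := by
            intro y hy
            refine lemA _ _ _ _ (Iglb' ξ') ?_
            rintro s ⟨y', hy', rfl⟩
            have hyy := MeetCl.meet hy hy' (hmeet y y')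
            have h12 : tle (I (ξ + ξ'))
                (ξ.toFun (meetF (meetF y y') x) + ξ'.toFun (meetF (meetF y y') x)) :=
              I_lb (ξ + ξ') _ hyy
            exact tle_trans h12
              (tle_add (hmono ξ _ _ (hmeet y y').1) (hmono ξ' _ _ (hmeet y y').2.1))
          refine lemA' _ _ _ _ (Iglb' ξ) ?_
          rintro s ⟨y, hy, rfl⟩
          exact st1 y hy
        · refine I_glb (ξ + ξ') _ fun y hy => ?_
          exact tle_add (I_lb ξ y hy) (I_lb ξ' y hy)
      have hsmul : ∀ (a : k) (ξ : TropHom k M k), I (a • ξ) = a * I ξ := by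
        intro a ξ
        by_cases ha : a = 0
        · subst ha
          rw [zero_mul]
          apply tle_antisymm
          · have h1 := I_lb ((0 : k) • ξ) u0 (MeetCl.base hu0)
            have h0 : ((0 : k) • ξ).toFun (meetF u0 x) = 0 := zero_mul _
            rwa [h0] at h1
          · exact tle_bot _
        · apply tle_antisymm
          · have h1 : tle (tinv a * I (a • ξ)) (I ξ) := by
              refine I_glb ξ _ fun y hy => ?_
              have h2 : tle (I (a • ξ)) (a * ξ.toFun (meetF y x)) := I_lb (a • ξ) y hy
              have h3 := tle_mul_left (tinv a) h2
              rwa [← mul_assoc, mul_comm (tinv a) a, mul_tinv ha, one_mul] at h3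
            have h4 := tle_mul_left a h1
            rwa [← mul_assoc, mul_tinv ha, one_mul] at h4
          · refine I_glb (a • ξ) _ fun y hy => ?_
            exact tle_mul_left a (I_lb ξ y hy)
      obtain ⟨xi, hxi⟩ := ι_surj ⟨I, hzero, hadd, fun a ξ => hsmul a ξ⟩
      have hval : ∀ ξ : TropHom k M k, ξ.toFun xi = I ξ := fun ξ =>
        congrArg (fun F => F.toFun ξ) hxi
      refine ⟨xi, fun ξ y hy => ?_, fun ξ d hd => ?_⟩
      · rw [hval ξ]
        exact I_lb ξ y hy
      · rw [hval ξ]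
        exact I_glb ξ d hd
    obtain ⟨x₁, hx₁low, hx₁glb⟩ := hXi w₁
    obtain ⟨x₂, hx₂low, hx₂glb⟩ := hXi w₂
    have hx₁S : ∀ ξ : TropHom k M k, tle (ξ.toFun x₁) (phi w₁ ξ) := by
      intro ξ
      refine phi_glb w₁ ξ _ fun u hu => ?_
      exact tle_trans (hx₁low ξ u (MeetCl.base hu)) (hom_mono ξ (hmeet u x).1)
    have hx₂S : ∀ ξ : TropHom k M k, tle (ξ.toFun x₂) (phi w₂ ξ) := by
      intro ξ
      refine phi_glb w₂ ξ _ fun u hu => ?_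
      exact tle_trans (hx₂low ξ u (MeetCl.base hu)) (hom_mono ξ (hmeet u x).1)
    have hv : tle (ζ.toFun x) (ζ.toFun x₁ + ζ.toFun x₂) := by
      by_cases hA : ∀ y : M, MeetCl {u : M | tle w₁ (α.toFun u)} y →
          tle (ζ.toFun x) (ζ.toFun (meetF y x))
      · exact tle_trans (hx₁glb ζ _ hA) (tle_add_left _ _)
      · push_neg at hA
        obtain ⟨y₁, hy₁, hn₁⟩ := hA
        by_cases hB : ∀ y : M, MeetCl {u : M | tle w₂ (α.toFun u)} y →
            tle (ζ.toFun x) (ζ.toFun (meetF y x))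
        · exact tle_trans (hx₂glb ζ _ hB) (tle_add_right _ _)
        · push_neg at hB
          obtain ⟨y₂, hy₂, hn₂⟩ := hB
          have hd : ζ.toFun x = ζ.toFun (meetF y₁ x) + ζ.toFun (meetF y₂ x) := by
            have e := congrArg ζ.toFun (C1 y₁ y₂ x (hall y₁ hy₁ y₂ hy₂))
            rwa [ζ.map_add'] at e
          rcases hadd_or (ζ.toFun (meetF y₁ x)) (ζ.toFun (meetF y₂ x)) with h | h
          · exact absurd (by rw [hd, h]; exact tle_refl _) hn₂
          · exact absurd (by rw [hd, h]; exact tle_refl _) hn₁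
    exact tle_trans hv (tle_add (B_ub w₁ ζ x₁ hx₁S) (B_ub w₂ ζ x₂ hx₂S))
  -- additivity of B in w
  have hBadd : ∀ (w₁ w₂ : N) (ζ : TropHom k M k),
      Bf (w₁ + w₂) ζ = Bf w₁ ζ + Bf w₂ ζ := by
    intro w₁ w₂ ζ
    apply tle_antisymm
    · exact B_lub (w₁ + w₂) ζ _ fun x hx => key w₁ w₂ ζ x hx
    · have h1 : tle (Bf w₁ ζ) (Bf (w₁ + w₂) ζ) :=
        B_lub w₁ ζ _ fun x hx => B_ub (w₁ + w₂) ζ x (Ssub w₁ w₂ x hx)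
      have h2 : tle (Bf w₂ ζ) (Bf (w₁ + w₂) ζ) :=
        B_lub w₂ ζ _ fun x hx => B_ub (w₁ + w₂) ζ x (Ssub' w₁ w₂ x hx)
      have h3 := tle_add h1 h2
      rwa [TropSemigroup.add_idem] at h3
  -- B at 0
  have phi0 : ∀ ξ : TropHom k M k, phi (0 : N) ξ = 0 := by
    intro ξ
    apply tle_antisymm
    · have h1 := phi_lb 0 ξ 0 (tle_bot _)
      rwa [ξ.map_zero'] at h1
    · exact tle_bot _
  have S0 : ∀ x : M, (∀ ξ : TropHom k M k, tle (ξ.toFun x) (phi (0 : N) ξ)) → x = 0 := by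
    intro x hx
    refine ι_eq fun ζ => ?_
    have h1 : tle (ζ.toFun x) 0 := by
      have h2 := hx ζ
      rwa [phi0 ζ] at h2
    rw [ζ.map_zero']
    exact tle_antisymm h1 (tle_bot _)
  have hB0 : ∀ ζ : TropHom k M k, Bf (0 : N) ζ = 0 := by
    intro ζ
    apply tle_antisymm
    · refine B_lub 0 ζ 0 fun x hx => ?_
      rw [S0 x hx, ζ.map_zero']
      exact tle_refl 0
    · exact tle_bot _
  -- B and scalars
  have phiS : ∀ (a : k), a ≠ 0 → ∀ (w : N) (ξ : TropHom k M k),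
      phi (a • w) ξ = a * phi w ξ := by
    intro a ha w ξ
    apply tle_antisymm
    · have h1 : tle (tinv a * phi (a • w) ξ) (phi w ξ) := by
        refine phi_glb w ξ _ fun u hu => ?_
        have hmem : tle (a • w) (α.toFun (a • u)) := by
          rw [α.map_smul']
          exact tle_smul a hu
        have h2 : tle (phi (a • w) ξ) (a * ξ.toFun u) := by
          have h3 := phi_lb (a • w) ξ (a • u) hmem
          have h4 : ξ.toFun (a • u) = a * ξ.toFun u := ξ.map_smul' a u
          rwa [h4] at h3
        have h3 := tle_mul_left (tinv a) h2
        rwa [← mul_assoc, mul_comm (tinv a) a, mul_tinv ha, one_mul] at h3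
      have h4 := tle_mul_left a h1
      rwa [← mul_assoc, mul_tinv ha, one_mul] at h4
    · refine phi_glb (a • w) ξ _ fun u hu => ?_
      have hmem : tle w (α.toFun (tinv a • u)) := by
        rw [α.map_smul']
        have h2 := tle_smul (tinv a) hu
        rwa [← TropModule.mul_smul, mul_comm (tinv a) a, mul_tinv ha,
          TropModule.one_smul] at h2
      have h5 : tle (phi w ξ) (ξ.toFun (tinv a • u)) := phi_lb w ξ _ hmem
      have h6 := tle_mul_left a h5
      have h7 : a * ξ.toFun (tinv a • u) = ξ.toFun u := by
        have h8 : ξ.toFun (tinv a • u) = tinv a * ξ.toFun u := ξ.map_smul' (tinv a) u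
        rw [h8, ← mul_assoc, mul_tinv ha, one_mul]
      rwa [h7] at h6
  have hBsmul : ∀ (a : k) (w : N) (ζ : TropHom k M k), Bf (a • w) ζ = a * Bf w ζ := by
    intro a w ζ
    by_cases ha : a = 0
    · subst ha
      rw [zero_mul, TropModule.zero_smul]
      exact hB0 ζ
    · apply tle_antisymm
      · refine B_lub (a • w) ζ _ fun x hx => ?_
        have hxw : ∀ ξ : TropHom k M k, tle (ξ.toFun (tinv a • x)) (phi w ξ) := by
          intro ξ
          have h1 : tle (ξ.toFun x) (a * phi w ξ) := by
            have h2 := hx ξ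
            rwa [phiS a ha w ξ] at h2
          have h2 := tle_mul_left (tinv a) h1
          have h3 : tinv a * (a * phi w ξ) = phi w ξ := by
            rw [← mul_assoc, mul_comm (tinv a) a, mul_tinv ha, one_mul]
          rw [h3] at h2
          have h4 : ξ.toFun (tinv a • x) = tinv a * ξ.toFun x := ξ.map_smul' (tinv a) x
          rw [h4]
          exact h2
        have h5 : tle (ζ.toFun (tinv a • x)) (Bf w ζ) := B_ub w ζ _ hxw
        have h6 := tle_mul_left a h5
        have h7 : a * ζ.toFun (tinv a • x) = ζ.toFun x := by
          have h8 : ζ.toFun (tinv a • x) = tinv a * ζ.toFun x := ζ.map_smul' (tinv a) x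
          rw [h8, ← mul_assoc, mul_tinv ha, one_mul]
        rwa [h7] at h6
      · have h1 : tle (Bf w ζ) (tinv a * Bf (a • w) ζ) := by
          refine B_lub w ζ _ fun x hx => ?_
          have hxw : ∀ ξ : TropHom k M k, tle (ξ.toFun (a • x)) (phi (a • w) ξ) := by
            intro ξ
            rw [phiS a ha w ξ]
            have h2 : ξ.toFun (a • x) = a * ξ.toFun x := ξ.map_smul' a x
            rw [h2]
            exact tle_mul_left a (hx ξ)
          have h3 : tle (ζ.toFun (a • x)) (Bf (a • w) ζ) := B_ub (a • w) ζ _ hxw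
          have h4 := tle_mul_left (tinv a) h3
          have h5 : tinv a * ζ.toFun (a • x) = ζ.toFun x := by
            have h6 : ζ.toFun (a • x) = a * ζ.toFun x := ζ.map_smul' a x
            rw [h6, ← mul_assoc, mul_comm (tinv a) a, mul_tinv ha, one_mul]
          rwa [h5] at h4
        have h7 := tle_mul_left a h1
        have h8 : a * (tinv a * Bf (a • w) ζ) = Bf (a • w) ζ := by
          rw [← mul_assoc, mul_tinv ha, one_mul]
        rwa [h8] at h7
  -- B on the image of α
  have phiα : ∀ (v : M) (ξ : TropHom k M k), phi (α.toFun v) ξ = ξ.toFun v := by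
    intro v ξ
    apply tle_antisymm
    · exact phi_lb (α.toFun v) ξ v (tle_refl _)
    · exact phi_glb (α.toFun v) ξ _ fun u hu => hom_mono ξ (orα hu)
  have hBα : ∀ (v : M) (ζ : TropHom k M k), Bf (α.toFun v) ζ = ζ.toFun v := by
    intro v ζ
    apply tle_antisymm
    · refine B_lub (α.toFun v) ζ _ fun x hx => ?_
      have h1 := hx ζ
      rwa [phiα v ζ] at h1
    · refine B_ub (α.toFun v) ζ v fun ξ => ?_
      rw [phiα v ξ]
      exact tle_refl _
  -- the inverse map
  have hβex : ∀ w : N, ∃ v : M, ∀ ζ : TropHom k M k, ζ.toFun v = Bf w ζ := by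
    intro w
    have hz : Bf w (0 : TropHom k M k) = 0 := by
      apply tle_antisymm
      · exact B_lub w 0 0 fun x _ => tle_refl 0
      · exact tle_bot _
    have hadd : ∀ ζ ζ' : TropHom k M k, Bf w (ζ + ζ') = Bf w ζ + Bf w ζ' := by
      intro ζ ζ'
      apply tle_antisymm
      · refine B_lub w (ζ + ζ') _ fun x hx => ?_
        exact tle_add (B_ub w ζ x hx) (B_ub w ζ' x hx)
      · have h1 : tle (Bf w ζ) (Bf w (ζ + ζ')) :=
          B_lub w ζ _ fun x hx => tle_trans (tle_add_left _ _) (B_ub w (ζ + ζ') x hx)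
        have h2 : tle (Bf w ζ') (Bf w (ζ + ζ')) :=
          B_lub w ζ' _ fun x hx => tle_trans (tle_add_right _ _) (B_ub w (ζ + ζ') x hx)
        have h3 := tle_add h1 h2
        rwa [TropSemigroup.add_idem] at h3
    have hs : ∀ (a : k) (ζ : TropHom k M k), Bf w (a • ζ) = a * Bf w ζ := by
      intro a ζ
      by_cases ha : a = 0
      · rw [ha, zero_mul]
        apply tle_antisymm
        · refine B_lub w ((0 : k) • ζ) 0 fun x _ => ?_
          have h1 : ((0 : k) • ζ).toFun x = 0 := zero_mul _
          rw [h1]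
          exact tle_refl 0
        · exact tle_bot _
      · apply tle_antisymm
        · refine B_lub w (a • ζ) _ fun x hx => ?_
          have h1 : (a • ζ).toFun x = a * ζ.toFun x := rfl
          rw [h1]
          exact tle_mul_left a (B_ub w ζ x hx)
        · have h1 : tle (Bf w ζ) (tinv a * Bf w (a • ζ)) := by
            refine B_lub w ζ _ fun x hx => ?_
            have h2 : tle ((a • ζ).toFun x) (Bf w (a • ζ)) := B_ub w (a • ζ) x hx
            have h3 := tle_mul_left (tinv a) h2
            have h4 : tinv a * (a • ζ).toFun x = ζ.toFun x := by
              show tinv a * (a * ζ.toFun x) = ζ.toFun x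
              rw [← mul_assoc, mul_comm (tinv a) a, mul_tinv ha, one_mul]
            rwa [h4] at h3
          have h5 := tle_mul_left a h1
          have h6 : a * (tinv a * Bf w (a • ζ)) = Bf w (a • ζ) := by
            rw [← mul_assoc, mul_tinv ha, one_mul]
          rwa [h6] at h5
    obtain ⟨v, hv⟩ := ι_surj ⟨fun ζ => Bf w ζ, hz, hadd, fun a ζ => hs a ζ⟩
    refine ⟨v, fun ζ => ?_⟩
    exact congrArg (fun F => F.toFun ζ) hv
  choose β₀ hβ₀ using hβex
  refine ⟨⟨β₀, ?_, ?_, ?_⟩, fun v => ?_⟩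
  · refine ι_eq fun ζ => ?_
    rw [hβ₀ 0 ζ, hB0 ζ, ζ.map_zero']
  · intro w₁ w₂
    refine ι_eq fun ζ => ?_
    rw [hβ₀ (w₁ + w₂) ζ, hBadd w₁ w₂ ζ, ζ.map_add', hβ₀ w₁ ζ, hβ₀ w₂ ζ]
  · intro a w
    refine ι_eq fun ζ => ?_
    rw [hβ₀ (a • w) ζ, hBsmul a w ζ, ζ.map_smul', hβ₀ w ζ]
    rfl
  · show β₀ (α.toFun v) = v
    refine ι_eq fun ζ => ?_
    rw [hβ₀ (α.toFun v) ζ, hBα v ζ]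
end

section
/- Let k be a quasi-complete totally ordered rational tropical semifield and let α : M → N be an injective homomorphism of finitely generated straight reflexive k-modules. Then (1) dim(M) ≤ dim(N), and (2) if dim(M) = dim(N) then α is lightly surjective. -/
/-! ## Auxiliary development for stmt2 -/

section Aux

variable {k : Type*} [TropSemifield k]

theorem tle_refl {M : Type*} [TropSemigroup M] (v : M) : tle v v :=
  TropSemigroup.add_idem v

theorem tle_trans {M : Type*} [TropSemigroup M] {u v w : M} (h1 : tle u v) (h2 : tle v w) :
    tle u w := by
  unfold tle at *
  rw [← h2, ← add_assoc, h1]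

theorem tle_antisymm {M : Type*} [TropSemigroup M] {v w : M} (h1 : tle v w) (h2 : tle w v) :
    v = w := by
  unfold tle at *
  rw [← h2, add_comm, h1]

theorem zero_tle {M : Type*} [TropSemigroup M] (v : M) : tle 0 v := zero_add v

theorem tle_zero_eq {M : Type*} [TropSemigroup M] {v : M} (h : tle v 0) : v = 0 := by
  unfold tle at h; rwa [add_zero] at h

theorem tle_add_left {M : Type*} [TropSemigroup M] (v w : M) : tle v (v + w) := by
  unfold tle; rw [← add_assoc, TropSemigroup.add_idem]

theorem tle_add_right {M : Type*} [TropSemigroup M] (v w : M) : tle w (v + w) := by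
  rw [add_comm]; exact tle_add_left w v

theorem add_tle {M : Type*} [TropSemigroup M] {v w u : M} (h1 : tle v u) (h2 : tle w u) :
    tle (v + w) u := by
  unfold tle at *
  rw [add_assoc, h2, h1]

theorem add_tle_add {M : Type*} [TropSemigroup M] {v w v' w' : M} (h1 : tle v w)
    (h2 : tle v' w') : tle (v + v') (w + w') := by
  unfold tle at *
  calc v + v' + (w + w') = (v + w) + (v' + w') := by
        rw [add_add_add_comm]
    _ = w + w' := by rw [h1, h2]

theorem tle_sum {M : Type*} [TropSemigroup M] {ι : Type*} {s : Finset ι} {f : ι → M} {i : ι}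
    (hi : i ∈ s) : tle (f i) (∑ j ∈ s, f j) := by
  classical
  rw [← Finset.add_sum_erase s f hi]
  exact tle_add_left _ _

theorem sum_tle {M : Type*} [TropSemigroup M] {ι : Type*} {s : Finset ι} {f : ι → M} {u : M}
    (h : ∀ i ∈ s, tle (f i) u) : tle (∑ j ∈ s, f j) u := by
  classical
  induction s using Finset.induction_on with
  | empty => simpa using zero_tle u
  | insert _ _ hx ih =>
    rw [Finset.sum_insert hx]
    exact add_tle (h _ (Finset.mem_insert_self _ _))
      (ih fun i hi => h i (Finset.mem_insert_of_mem hi))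

theorem sum_tle_sum {M : Type*} [TropSemigroup M] {ι : Type*} {s : Finset ι} {f g : ι → M}
    (h : ∀ i ∈ s, tle (f i) (g i)) : tle (∑ j ∈ s, f j) (∑ j ∈ s, g j) :=
  sum_tle fun i hi => tle_trans (h i hi) (tle_sum hi)

/-- In an idempotent totally ordered semifield, a nonzero finite sum is attained by a term. -/
theorem sum_attained (hto : TotallyOrderedTSF k) {ι : Type*} {s : Finset ι} {f : ι → k}
    (h : (∑ j ∈ s, f j) ≠ 0) : ∃ i ∈ s, f i = ∑ j ∈ s, f j := by
  classical
  induction s using Finset.induction_on with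
  | empty => simp at h
  | @insert a s hx ih =>
    rw [Finset.sum_insert hx] at h ⊢
    rcases hto (f a) (∑ j ∈ s, f j) with hle | hle
    · have hs : f a + ∑ j ∈ s, f j = ∑ j ∈ s, f j := hle
      rw [hs] at h ⊢
      obtain ⟨i, hi, hfi⟩ := ih h
      exact ⟨i, Finset.mem_insert_of_mem hi, hfi⟩
    · have hs : f a + ∑ j ∈ s, f j = f a := by
        unfold tle at hle; rw [add_comm]; exact hle
      exact ⟨a, Finset.mem_insert_self _ _, hs.symm⟩

theorem mul_tinv {a : k} (ha : a ≠ 0) : a * tinv a = 1 := by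
  unfold tinv
  rw [dif_neg ha]
  exact Classical.choose_spec (TropSemifield.exists_inv a ha)

theorem mul_left_cancel' {a b c : k} (ha : a ≠ 0) (h : a * b = a * c) : b = c := by
  have := congrArg (fun x => tinv a * x) h
  simpa [← mul_assoc, mul_comm (tinv a) a, mul_tinv ha] using this

theorem mul_ne_zero' {a b : k} (ha : a ≠ 0) (hb : b ≠ 0) : a * b ≠ 0 := by
  intro h
  apply hb
  have : a * b = a * 0 := by rw [h, mul_zero]
  exact mul_left_cancel' ha this

theorem tle_mul_right {a b : k} (c : k) (h : tle a b) : tle (a * c) (b * c) := by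
  unfold tle at *
  rw [← add_mul, h]

theorem tle_mul_left {a b : k} (c : k) (h : tle a b) : tle (c * a) (c * b) := by
  unfold tle at *
  rw [← mul_add, h]

theorem tle_of_mul_tle {a b c : k} (hc : c ≠ 0) (h : tle (a * c) (b * c)) : tle a b := by
  have := tle_mul_right (tinv c) h
  rwa [mul_assoc, mul_assoc, mul_tinv hc, mul_one, mul_one] at this

end Aux

section Aux2

variable {k : Type*} [TropSemifield k]
variable {M : Type*} [TropSemigroup M] [TropModule k M]

theorem tle_smul_left {a b : k} (v : M) (h : tle a b) : tle (a • v) (b • v) := by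
  unfold tle at *
  rw [← TropModule.add_smul, h]

theorem tle_smul_right (a : k) {v w : M} (h : tle v w) : tle (a • v) (a • w) := by
  unfold tle at *
  rw [← TropModule.smul_add, h]

theorem smul_cancel {a : k} (ha : a ≠ 0) {v w : M} (h : a • v = a • w) : v = w := by
  have key : ∀ u : M, tinv a • (a • u) = u := fun u => by
    rw [← TropModule.mul_smul, mul_comm (tinv a) a, mul_tinv ha, TropModule.one_smul]
  rw [← key v, ← key w, h]

theorem smul_ne_zero' {a : k} (ha : a ≠ 0) {v : M} (hv : v ≠ 0) : a • v ≠ 0 := by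
  intro h
  exact hv (smul_cancel ha (h.trans (TropModule.smul_zero (M := M) a).symm))

theorem hom_tle {N : Type*} [TropSemigroup N] [TropModule k N] (ξ : TropHom k M N) {v w : M}
    (h : tle v w) : tle (ξ.toFun v) (ξ.toFun w) := by
  unfold tle at *
  rw [← ξ.map_add', h]

theorem hom_sum {N : Type*} [TropSemigroup N] [TropModule k N] (ξ : TropHom k M N) {ι : Type*}
    (s : Finset ι) (f : ι → M) : ξ.toFun (∑ i ∈ s, f i) = ∑ i ∈ s, ξ.toFun (f i) := by
  classical
  induction s using Finset.induction_on with
  | empty => simpa using ξ.map_zero'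
  | insert _ _ hx ih => rw [Finset.sum_insert hx, Finset.sum_insert hx, ξ.map_add', ih]

/-- For a functional `ξ : M → k`, `ξ (a • v) = a * ξ v`. -/
theorem fun_smul (ξ : TropHom k M k) (a : k) (v : M) : ξ.toFun (a • v) = a * ξ.toFun v :=
  ξ.map_smul' a v

theorem tray_mem_smul (e : M) (a : k) : a • e ∈ tray k e := ⟨a, rfl⟩

theorem tray_smul {a : k} (ha : a ≠ 0) (e : M) : tray k (a • e) = tray k e := by
  ext v
  constructor
  · rintro ⟨b, rfl⟩
    refine ⟨b * a, ?_⟩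
    show (b * a) • e = b • a • e
    exact TropModule.mul_smul b a e
  · rintro ⟨b, rfl⟩
    refine ⟨b * tinv a, ?_⟩
    show (b * tinv a) • a • e = b • e
    rw [TropModule.mul_smul, ← TropModule.mul_smul (tinv a) a, mul_comm (tinv a) a,
      mul_tinv ha, TropModule.one_smul]

theorem extremal_smul {a : k} (ha : a ≠ 0) {e : M} (he : TExtremal e) : TExtremal (a • e) := by
  refine ⟨smul_ne_zero' ha he.1, fun v w h => ?_⟩
  have h' : (tinv a) • v + (tinv a) • w = e := by
    rw [← TropModule.smul_add, h, ← TropModule.mul_smul, mul_comm, mul_tinv ha,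
      TropModule.one_smul]
  rcases he.2 _ _ h' with h1 | h1
  · left
    rw [← h1, ← TropModule.mul_smul, mul_comm a (tinv a), mul_comm (tinv a) a,
      mul_tinv ha, TropModule.one_smul]
  · right
    rw [← h1, ← TropModule.mul_smul, mul_comm a (tinv a), mul_comm (tinv a) a,
      mul_tinv ha, TropModule.one_smul]

/-- n-ary extremality. -/
theorem extremal_sum {e : M} (he : TExtremal e) {ι : Type*} {s : Finset ι} {f : ι → M}
    (h : ∑ i ∈ s, f i = e) : ∃ i ∈ s, f i = e := by
  classical
  induction s using Finset.induction_on with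
  | empty => exact absurd h.symm he.1
  | @insert a s hx ih =>
    rw [Finset.sum_insert hx] at h
    rcases he.2 _ _ h with h1 | h1
    · exact ⟨a, Finset.mem_insert_self _ _, h1⟩
    · obtain ⟨i, hi, hfi⟩ := ih h1
      exact ⟨i, Finset.mem_insert_of_mem hi, hfi⟩

theorem isTInf_unique {v w z z' : M} (h : IsTInf v w z) (h' : IsTInf v w z') : z = z' :=
  tle_antisymm (h'.2.2 z h.1 h.2.1) (h.2.2 z' h'.1 h'.2.1)

theorem isTInf_of_tle {v w : M} (h : tle v w) : IsTInf w v v :=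
  ⟨h, tle_refl v, fun _ _ hy => hy⟩

/-- n-ary inf distributivity from straightness. -/
theorem straight_sum_inf (hs : Straight M) {ι : Type*} (s : Finset ι) (f : ι → M) (w : M)
    (z : ι → M) (hz : ∀ i ∈ s, IsTInf (f i) w (z i)) :
    IsTInf (∑ i ∈ s, f i) w (∑ i ∈ s, z i) := by
  classical
  induction s using Finset.induction_on with
  | empty =>
    simp only [Finset.sum_empty]
    exact ⟨tle_refl 0, zero_tle w, fun y hy _ => hy⟩
  | @insert a s hx ih =>
    rw [Finset.sum_insert hx, Finset.sum_insert hx]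
    exact hs.2 _ _ _ _ _ (hz a (Finset.mem_insert_self _ _))
      (ih fun i hi => hz i (Finset.mem_insert_of_mem hi))

/-- If `e` is extremal and `e ≤ ∑ f i`, then `e ≤ f i` for some `i ∈ s`. -/
theorem extremal_tle_sum (hs : Straight M) {e : M} (he : TExtremal e) {ι : Type*}
    {s : Finset ι} {f : ι → M} (h : tle e (∑ i ∈ s, f i)) : ∃ i ∈ s, tle e (f i) := by
  classical
  choose z hz using fun i => hs.1 (f i) e
  have hinf : IsTInf (∑ i ∈ s, f i) e (∑ i ∈ s, z i) :=
    straight_sum_inf hs s f e z fun i _ => hz i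
  have he' : e = ∑ i ∈ s, z i := by
    refine tle_antisymm (hinf.2.2 e h (tle_refl e)) hinf.2.1
  obtain ⟨i, hi, hzi⟩ := extremal_sum he he'.symm
  exact ⟨i, hi, by rw [← hzi]; exact (hz i).1⟩

/-- Any nonempty finite set in `M` has a maximal element w.r.t. `tle`. -/
theorem exists_tle_maximal {ι : Type*} {s : Finset ι} (hne : s.Nonempty) (g : ι → M) :
    ∃ i ∈ s, ∀ j ∈ s, ¬ tlt (g i) (g j) := by
  classical
  induction s using Finset.induction_on with
  | empty => exact absurd hne (by simp)
  | @insert a s hx ih =>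
    rcases s.eq_empty_or_nonempty with rfl | hs
    · exact ⟨a, Finset.mem_insert_self _ _, by
        intro j hj
        rw [Finset.mem_insert] at hj
        rcases hj with rfl | hj
        · exact fun h => h.2 rfl
        · simp at hj⟩
    · obtain ⟨i, hi, hmax⟩ := ih hs
      by_cases hlt : tlt (g i) (g a)
      · refine ⟨a, Finset.mem_insert_self _ _, ?_⟩
        intro j hj haj
        rw [Finset.mem_insert] at hj
        rcases hj with rfl | hj
        · exact haj.2 rfl
        · exact hmax j hj ⟨tle_trans hlt.1 haj.1, fun h => haj.2 (tle_antisymm haj.1 (h ▸ hlt.1))⟩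
      · refine ⟨i, Finset.mem_insert_of_mem hi, ?_⟩
        intro j hj
        rw [Finset.mem_insert] at hj
        rcases hj with rfl | hj
        · exact hlt
        · exact hmax j hj

end Aux2

section Aux3

variable {k : Type*} [TropSemifield k]
variable {X : Type*} [TropSemigroup X] [TropModule k X]

theorem sum_smul' {ι : Type*} (s : Finset ι) (a : ι → k) (v : X) :
    (∑ i ∈ s, a i) • v = ∑ i ∈ s, a i • v := by
  classical
  induction s using Finset.induction_on with
  | empty => simpa using TropModule.zero_smul v
  | insert _ _ hx ih =>
    rw [Finset.sum_insert hx, Finset.sum_insert hx, TropModule.add_smul, ih]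

/-- Normalize a generating combination to a sum over the generating finset. -/
theorem gen_finset {S : Finset X} (hgen : TGenerates k (↑S : Set X)) (v : X) :
    ∃ c : X → k, v = ∑ y ∈ S, c y • y := by
  classical
  obtain ⟨r, a, x, hx, hv⟩ := hgen v
  refine ⟨fun y => ∑ i ∈ Finset.univ.filter (fun i => x i = y), a i, ?_⟩
  rw [hv, ← Finset.sum_fiberwise_of_maps_to (fun i _ => hx i) (fun i => a i • x i)]
  refine Finset.sum_congr rfl fun y _ => ?_
  rw [sum_smul']
  exact Finset.sum_congr rfl fun i hi => by rw [(Finset.mem_filter.mp hi).2]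

/-- A finset combination is a `TGenerates`-style combination. -/
theorem finset_combo_gen (T : Finset X) (c : X → k) :
    ∃ (r : ℕ) (a : Fin r → k) (x : Fin r → X), (∀ i, x i ∈ (↑T : Set X)) ∧
      ∑ y ∈ T, c y • y = ∑ i, a i • x i := by
  classical
  have h1 : ∑ i : Fin T.card, c (T.equivFin.symm i : X) • ((T.equivFin.symm i : X)) =
      ∑ t : ↥T, c (t : X) • (t : X) :=
    Equiv.sum_comp T.equivFin.symm (fun t : ↥T => c (t : X) • (t : X))
  have h2 : ∑ t : ↥T, c (t : X) • (t : X) = ∑ y ∈ T, c y • y := by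
    rw [Finset.univ_eq_attach]
    exact Finset.sum_attach T (fun y => c y • y)
  exact ⟨T.card, fun i => c (T.equivFin.symm i : X), fun i => (T.equivFin.symm i : X),
    fun i => (T.equivFin.symm i).2, (h2.symm.trans h1.symm)⟩

/-- If `s` is a combination of the other elements, the rest still generates. -/
theorem erase_generates [DecidableEq X] {S : Finset X} (hgen : TGenerates k (↑S : Set X)) {s : X} (hs : s ∈ S)
    (b : X → k) (hb : s = ∑ x ∈ S.erase s, b x • x) :
    TGenerates k (↑(S.erase s) : Set X) := by
  classical
  intro v
  obtain ⟨c, hc⟩ := gen_finset hgen v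
  have hv : v = ∑ x ∈ S.erase s, (c s * b x + c x) • x := by
    rw [hc, ← Finset.add_sum_erase S (fun y => c y • y) hs]
    have : c s • s = ∑ x ∈ S.erase s, (c s * b x) • x := by
      have h0 : c s • s = c s • ∑ x ∈ S.erase s, b x • x := congrArg (fun z => c s • z) hb
      rw [h0, tsmul_sum]
      exact Finset.sum_congr rfl fun x _ => (TropModule.mul_smul _ _ _).symm
    rw [this, ← Finset.sum_add_distrib]
    exact Finset.sum_congr rfl fun x _ => by rw [TropModule.add_smul]
  obtain ⟨r, a, x, hx, hsum⟩ := finset_combo_gen (S.erase s) (fun x => c s * b x + c x)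
  exact ⟨r, a, x, hx, hv.trans hsum⟩

theorem iota_sep (hι : Function.Injective (iotaFun k X)) {v w : X}
    (h : ∀ ξ : TropHom k X k, ξ.toFun v = ξ.toFun w) : v = w :=
  hι (TropHom.ext' h)

theorem tle_of_pointwise (hι : Function.Injective (iotaFun k X)) {v w : X}
    (h : ∀ ξ : TropHom k X k, tle (ξ.toFun v) (ξ.toFun w)) : tle v w := by
  have : ∀ ξ : TropHom k X k, ξ.toFun (v + w) = ξ.toFun w := fun ξ => by
    rw [ξ.map_add']; exact h ξ
  exact iota_sep hι this

/-- Main structure theorem for finitely generated modules embedded in their double dual: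
there is a generating set consisting of extremal elements, one per extremal ray. -/
theorem exists_good_genset (hto : TotallyOrderedTSF k) (hfg : TFG k X)
    (hι : Function.Injective (iotaFun k X)) :
    ∃ S : Finset X, TGenerates k (↑S : Set X) ∧ (∀ s ∈ S, TExtremal s) ∧
      Set.InjOn (tray k) (↑S : Set X) ∧ extRays k X = tray k '' (↑S : Set X) := by
  classical
  obtain ⟨S₀, hS₀⟩ := hfg
  -- pick a generating subset of minimal cardinality
  set P : Finset X → Prop := fun T => TGenerates k ((T : Finset X) : Set X) with hP
  have hPne : (S₀.powerset.filter P).Nonempty :=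
    ⟨S₀, Finset.mem_filter.mpr ⟨Finset.mem_powerset_self S₀, hS₀⟩⟩
  obtain ⟨S, hSmem, hSmin⟩ :=
    Finset.exists_min_image (S₀.powerset.filter P) Finset.card hPne
  rw [Finset.mem_filter, Finset.mem_powerset] at hSmem
  obtain ⟨hSsub, hSgen⟩ := hSmem
  have herase : ∀ s ∈ S, ¬ TGenerates k (↑(S.erase s) : Set X) := by
    intro s hs hcon
    have hmem : S.erase s ∈ S₀.powerset.filter P :=
      Finset.mem_filter.mpr
        ⟨Finset.mem_powerset.mpr ((S.erase_subset s).trans hSsub), hcon⟩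
    have := hSmin _ hmem
    have hlt := Finset.card_erase_lt_of_mem hs
    omega
  have hzero : (0 : X) ∉ S := by
    intro h0
    refine herase 0 h0 (erase_generates hSgen h0 (fun _ => 0) ?_)
    rw [Finset.sum_eq_zero fun x _ => TropModule.zero_smul x]
  -- every element of S is extremal
  have hext : ∀ s ∈ S, TExtremal s := by
    intro s hs
    refine ⟨fun h => hzero (h ▸ hs), fun v w hvw => ?_⟩
    obtain ⟨a, ha⟩ := gen_finset hSgen v
    obtain ⟨b, hb⟩ := gen_finset hSgen w
    have hsd : s = ∑ x ∈ S, (a x + b x) • x := by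
      rw [← hvw, ha, hb, ← Finset.sum_add_distrib]
      exact Finset.sum_congr rfl fun x _ => (TropModule.add_smul _ _ _).symm
    have hvs : tle v s := by rw [← hvw]; exact tle_add_left v w
    have hws : tle w s := by rw [← hvw]; exact tle_add_right v w
    rcases hto 1 (a s + b s) with h1 | h1
    · -- the coefficient at s is ≥ 1, so one of a s, b s is ≥ 1
      have key : ∀ (cc : X → k) (u : X), u = ∑ x ∈ S, cc x • x → tle 1 (cc s) →
          tle u s → u = s := by
        intro cc u hu hcc hus
        have h2 : tle s u := by
          have h3 : tle ((1:k) • s) (cc s • s) := tle_smul_left s hcc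
          rw [TropModule.one_smul] at h3
          refine tle_trans h3 ?_
          rw [hu]
          exact tle_sum (f := fun y => cc y • y) hs
        exact tle_antisymm hus h2
      rcases hto (a s) (b s) with hab | hab
      · right
        refine key b w hb ?_ hws
        have hsum : a s + b s = b s := hab
        rwa [hsum] at h1
      · left
        refine key a v ha ?_ hvs
        have hsum : a s + b s = a s := by rw [add_comm]; exact hab
        rwa [hsum] at h1
    · -- coefficient at s is ≤ 1
      by_cases hds : a s + b s = 1
      · have key : ∀ (cc : X → k) (u : X), u = ∑ x ∈ S, cc x • x → cc s = a s + b s →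
            tle u s → u = s := by
          intro cc u hu hcc hus
          have h2 : tle s u := by
            have h3 : tle ((1:k) • s) (cc s • s) := by
              rw [hcc, hds]; exact tle_refl _
            rw [TropModule.one_smul] at h3
            refine tle_trans h3 ?_
            rw [hu]
            exact tle_sum (f := fun y => cc y • y) hs
          exact tle_antisymm hus h2
        rcases hto (a s) (b s) with hab | hab
        · right
          refine key b w hb ?_ hws
          exact hab.symm
        · left
          refine key a v ha ?_ hvs
          have h2 : a s + b s = a s := by rw [add_comm]; exact hab
          exact h2.symm
      · -- coefficient at s is < 1 : s is generated by the others, contradiction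
        exfalso
        have hsplit : s = (a s + b s) • s + ∑ x ∈ S.erase s, (a x + b x) • x := by
          conv_lhs => rw [hsd]
          exact (Finset.add_sum_erase S (fun y => (a y + b y) • y) hs).symm
        have hpt : ∀ ξ : TropHom k X k,
            ξ.toFun s = ξ.toFun (∑ x ∈ S.erase s, (a x + b x) • x) := by
          intro ξ
          have hx : ξ.toFun s = (a s + b s) * ξ.toFun s +
              ξ.toFun (∑ x ∈ S.erase s, (a x + b x) • x) := by
            conv_lhs => rw [hsplit]
            rw [ξ.map_add', fun_smul]
          rcases hto ((a s + b s) * ξ.toFun s)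
              (ξ.toFun (∑ x ∈ S.erase s, (a x + b x) • x)) with hcmp | hcmp
          · rw [hx]; exact hcmp
          · have h5 : ξ.toFun s = (a s + b s) * ξ.toFun s := by
              conv_lhs => rw [hx]
              exact (add_comm _ _).trans hcmp
            by_cases hx0 : ξ.toFun s = 0
            · have h7 : tle (ξ.toFun (∑ x ∈ S.erase s, (a x + b x) • x)) (ξ.toFun s) := by
                rw [hx]; exact tle_add_right _ _
              rw [hx0] at h7
              rw [hx0, tle_zero_eq h7]
            · exfalso
              apply hds
              have h6 : ξ.toFun s * (a s + b s) = ξ.toFun s * 1 := by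
                rw [mul_one, mul_comm]
                exact h5.symm
              exact mul_left_cancel' hx0 h6
        exact herase s hs (erase_generates hSgen hs (fun x => a x + b x)
          (iota_sep hι hpt))
  -- tray is injective on S
  have hinjtray : Set.InjOn (tray k) (↑S : Set X) := by
    intro s hsm s' hsm' htr
    by_contra hne
    have hs : s ∈ S := hsm
    have hs' : s' ∈ S := hsm'
    have hmem : s' ∈ tray k s := by
      rw [htr]
      exact ⟨1, by show (1:k) • s' = s'; exact TropModule.one_smul s'⟩
    obtain ⟨c, hc⟩ := hmem
    have hc' : c • s = s' := hc
    refine herase s' hs' (erase_generates hSgen hs' (fun x => if x = s then c else 0) ?_)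
    have hsmem : s ∈ S.erase s' := Finset.mem_erase.mpr ⟨hne, hs⟩
    rw [← Finset.add_sum_erase _ _ hsmem]
    show s' = (if s = s then c else 0) • s +
      ∑ x ∈ (S.erase s').erase s, (if x = s then c else 0) • x
    have hz : ∑ x ∈ (S.erase s').erase s, (if x = s then c else 0) • x = 0 :=
      Finset.sum_eq_zero fun x hx => by
        rw [if_neg (Finset.mem_erase.mp hx).1, TropModule.zero_smul]
    rw [hz, add_zero, if_pos rfl]
    exact hc'.symm
  refine ⟨S, hSgen, hext, hinjtray, ?_⟩
  ext R
  constructor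
  · rintro ⟨e, he, rfl⟩
    obtain ⟨c, hc⟩ := gen_finset hSgen e
    obtain ⟨x, hxS, hxe⟩ := extremal_sum he hc.symm
    have hcx : c x ≠ 0 := by
      intro h0
      rw [h0, TropModule.zero_smul] at hxe
      exact he.1 hxe.symm
    exact ⟨x, hxS, by rw [← hxe, tray_smul hcx]⟩
  · rintro ⟨s, hsS, rfl⟩
    exact ⟨s, hext s hsS, rfl⟩

theorem tdim_eq_card {S : Finset X} (hinj : Set.InjOn (tray k) (↑S : Set X))
    (hrays : extRays k X = tray k '' (↑S : Set X)) : tdim k X = S.card := by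
  rw [tdim, hrays, Set.ncard_image_of_injOn hinj, Set.ncard_coe_finset]

end Aux3

section Duals

variable {k : Type*} [TropSemifield k]
variable {X : Type*} [TropSemigroup X] [TropModule k X]

/-- Existence of the dual element of an extremal element: the residuation
`v ↦ max { a | a • f ≤ v }` is a linear functional. -/
theorem exists_dual (hto : TotallyOrderedTSF k) (hqc : QuasiCompleteTSF k) (hs : Straight X)
    (hι : Function.Injective (iotaFun k X)) {f : X} (hf : TExtremal f) :
    ∃ η : TropHom k X k, ∀ (a : k) (v : X), tle (a • f) v ↔ tle a (η.toFun v) := by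
  classical
  have hξ₀ : ∃ ξ₀ : TropHom k X k, ξ₀.toFun f ≠ 0 := by
    by_contra h
    push_neg at h
    exact hf.1 (iota_sep hι fun ξ => (h ξ).trans ξ.map_zero'.symm)
  obtain ⟨ξ₀, hξ₀⟩ := hξ₀
  have hub : ∀ (v : X) (ξ : TropHom k X k), ξ.toFun f ≠ 0 → ∀ a : k, tle (a • f) v →
      tle a (ξ.toFun v * tinv (ξ.toFun f)) := by
    intro v ξ hξf a ha
    have h1 : tle (ξ.toFun (a • f)) (ξ.toFun v) := hom_tle ξ ha
    rw [fun_smul] at h1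
    have h2 := tle_mul_right (tinv (ξ.toFun f)) h1
    rwa [mul_assoc, mul_tinv hξf, mul_one] at h2
  have hθ : ∀ v : X, ∃ c : k, ∀ a : k, tle (a • f) v ↔ tle a c := by
    intro v
    obtain ⟨c, hc1, hc2⟩ := hqc {b : k | ∀ a : k, tle (a • f) v → tle a b}
      ⟨ξ₀.toFun v * tinv (ξ₀.toFun f), fun a ha => hub v ξ₀ hξ₀ a ha⟩
    have hca : ∀ a : k, tle (a • f) v → tle a c := fun a ha =>
      hc2 a fun b hb => hb a ha
    have hcA : tle (c • f) v := by
      apply tle_of_pointwise hι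
      intro ξ
      rw [fun_smul]
      by_cases hξf : ξ.toFun f = 0
      · rw [hξf, mul_zero]
        exact zero_tle _
      · have hu : (ξ.toFun v * tinv (ξ.toFun f)) ∈
            {b : k | ∀ a : k, tle (a • f) v → tle a b} := fun a ha => hub v ξ hξf a ha
        have h3 := tle_mul_right (ξ.toFun f) (hc1 _ hu)
        rwa [mul_assoc, mul_comm (tinv (ξ.toFun f)) (ξ.toFun f), mul_tinv hξf,
          mul_one] at h3
    refine ⟨c, fun a => ⟨fun ha => hca a ha, fun ha => ?_⟩⟩
    exact tle_trans (tle_smul_left f ha) hcA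
  choose θ hθspec using hθ
  have hself : ∀ v : X, tle (θ v • f) v := fun v => (hθspec v (θ v)).mpr (tle_refl _)
  have hzero : θ 0 = 0 := by
    have h1 : θ 0 • f = 0 := tle_zero_eq (hself 0)
    by_contra h0
    exact smul_ne_zero' h0 hf.1 h1
  have hadd : ∀ v w : X, θ (v + w) = θ v + θ w := by
    intro v w
    apply tle_antisymm
    · -- θ (v+w) ≤ θ v + θ w
      set a : k := θ (v + w) with ha
      by_cases ha0 : a = 0
      · rw [ha0]; exact zero_tle _
      · have haf : TExtremal (a • f) := extremal_smul ha0 hf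
        obtain ⟨z₁, hz₁⟩ := hs.1 v (a • f)
        obtain ⟨z₂, hz₂⟩ := hs.1 w (a • f)
        have hvw : IsTInf (v + w) (a • f) (z₁ + z₂) := hs.2 v w (a • f) z₁ z₂ hz₁ hz₂
        have hvw' : IsTInf (v + w) (a • f) (a • f) := isTInf_of_tle (hself (v + w))
        have heq : a • f = z₁ + z₂ := isTInf_unique hvw' hvw
        rcases haf.2 z₁ z₂ heq.symm with h | h
        · have h4 : tle (a • f) v := by rw [← h]; exact hz₁.1
          exact tle_trans ((hθspec v a).mp h4) (tle_add_left _ _)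
        · have h4 : tle (a • f) w := by rw [← h]; exact hz₂.1
          exact tle_trans ((hθspec w a).mp h4) (tle_add_right _ _)
    · -- θ v + θ w ≤ θ (v+w)
      refine (hθspec (v + w) (θ v + θ w)).mp ?_
      rw [TropModule.add_smul]
      exact add_tle (tle_trans (hself v) (tle_add_left v w))
        (tle_trans (hself w) (tle_add_right v w))
  have hsmul : ∀ (a : k) (v : X), θ (a • v) = a * θ v := by
    intro a v
    by_cases ha0 : a = 0
    · rw [ha0, TropModule.zero_smul, hzero, zero_mul]
    · apply tle_antisymm
      · have h1 : tle (θ (a • v) • f) (a • v) := hself (a • v)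
        have h2 : tle ((tinv a * θ (a • v)) • f) v := by
          have h3 := tle_smul_right (tinv a) h1
          rw [← TropModule.mul_smul, ← TropModule.mul_smul, mul_comm (tinv a) a,
            mul_tinv ha0, TropModule.one_smul] at h3
          exact h3
        have h4 := (hθspec v _).mp h2
        have h5 := tle_mul_left a h4
        rwa [← mul_assoc, mul_tinv ha0, one_mul] at h5
      · refine (hθspec (a • v) (a * θ v)).mp ?_
        rw [TropModule.mul_smul]
        exact tle_smul_right a (hself v)
  exact ⟨⟨θ, hzero, hadd, hsmul⟩, fun a v => hθspec v a⟩

/-- Reconstruction: every element is the canonical combination of the generators. -/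
theorem recon {S : Finset X} (hgen : TGenerates k (↑S : Set X)) (D : ↥S → TropHom k X k)
    (hD : ∀ (s : ↥S) (a : k) (v : X), tle (a • (s : X)) v ↔ tle a ((D s).toFun v)) (v : X) :
    v = ∑ s ∈ S.attach, ((D s).toFun v) • (s : X) := by
  apply tle_antisymm
  · obtain ⟨c, hc⟩ := gen_finset hgen v
    conv_lhs => rw [hc]
    refine sum_tle fun y hy => ?_
    have h1 : tle (c y • y) v := by
      rw [hc]
      exact tle_sum (f := fun y => c y • y) hy
    have h2 : tle (c y) ((D ⟨y, hy⟩).toFun v) := (hD ⟨y, hy⟩ (c y) v).mp h1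
    exact tle_trans (tle_smul_left y h2)
      (tle_sum (f := fun s : ↥S => ((D s).toFun v) • (s : X)) (S.mem_attach ⟨y, hy⟩))
  · exact sum_tle fun s _ => (hD s _ v).mpr (tle_refl _)

end Duals

section Dep

variable {k : Type*} [TropSemifield k]

/-- Restrict a sum to a subtype outside of which the coefficient vanishes. -/
theorem sum_transfer {R : Type*} [Fintype R] (p : R → Prop) [DecidablePred p]
    (lf g : R → k) (h0 : ∀ i, ¬ p i → lf i = 0) :
    ∑ i, lf i * g i = ∑ i : Subtype p, lf i.1 * g i.1 := by
  classical
  have h1 : ∑ i ∈ Finset.univ.filter p, lf i * g i = ∑ i : Subtype p, lf i.1 * g i.1 :=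
    Finset.sum_subtype _ (by simp) _
  rw [← h1]
  exact (Finset.sum_subset (Finset.filter_subset _ _) fun x _ hx => by
    rw [h0 x (by simpa using hx), zero_mul]).symm

theorem sum_erase_eq_update {R : Type*} [Fintype R] [DecidableEq R] (f : R → k) (i₀ : R) :
    ∑ i ∈ Finset.univ.erase i₀, f i = ∑ i, Function.update f i₀ 0 i := by
  rw [Finset.sum_update_of_mem (Finset.mem_univ i₀), zero_add, Finset.erase_eq]

theorem sum_univ_inst {α : Type*} {β : Type*} [AddCommMonoid β] (F1 F2 : Fintype α)
    (f : α → β) :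
    @Finset.sum α β _ (@Finset.univ α F1) f = @Finset.sum α β _ (@Finset.univ α F2) f := by
  rw [Subsingleton.elim F1 F2]

/-- Tropical dependence: more vectors than coordinates admit a nontrivial relation in which
every coordinate value survives deletion of any single vector. -/
theorem trop_dep (hto : TotallyOrderedTSF k) (h10 : (1:k) ≠ 0) :
    ∀ (n : ℕ) {C : Type v} [Fintype C] [DecidableEq C], Fintype.card C ≤ n →
      ∀ {R : Type u} [Fintype R] [DecidableEq R], Fintype.card C < Fintype.card R →
      ∀ (A : R → C → k),
      ∃ lam : R → k, (∃ i, lam i ≠ 0) ∧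
        ∀ (i₀ : R) (j : C), ∑ i ∈ Finset.univ.erase i₀, lam i * A i j = ∑ i, lam i * A i j := by
  intro n
  induction n with
  | zero =>
    intro C _ _ hn R _ _ hcard A
    have hCempty : IsEmpty C := Fintype.card_eq_zero_iff.mp (Nat.le_zero.mp hn)
    have hRne : Nonempty R := Fintype.card_pos_iff.mp (Nat.lt_of_le_of_lt (Nat.zero_le _) hcard)
    obtain ⟨i0⟩ := hRne
    exact ⟨fun _ => 1, ⟨i0, h10⟩, fun i₀ j => (hCempty.false j).elim⟩
  | succ n ih =>
    intro C _ _ hn R _ _ hcard A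
    classical
    by_cases hτ : ∃ τ : C → R, Function.Injective τ ∧ ∀ j, A (τ j) j ≠ 0
    · -- Cramer case
      obtain ⟨τ, hinj, hne⟩ := hτ
      have himcard : (Finset.univ.image τ).card = Fintype.card C := by
        rw [Finset.card_image_of_injective _ hinj, Finset.card_univ]
      obtain ⟨R', hR'sub, hR'card⟩ := Finset.exists_superset_card_eq
        (n := Fintype.card C + 1) (by rw [himcard]; omega) hcard
      have hcardRh : Fintype.card ↥R' = Fintype.card C + 1 := by
        rw [Fintype.card_coe, hR'card]
      set τh : C → ↥R' := fun j => ⟨τ j, hR'sub (Finset.mem_image_of_mem τ (Finset.mem_univ j))⟩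
        with hτh
      have hτhinj : Function.Injective τh := fun a b h => hinj (congrArg Subtype.val h)
      -- the single row missed by τh
      have hsd : (Finset.univ \ Finset.univ.image τh).Nonempty := by
        rw [← Finset.card_pos, Finset.card_sdiff_of_subset (Finset.subset_univ _),
          Finset.card_univ, hcardRh, Finset.card_image_of_injective _ hτhinj,
          Finset.card_univ]
        omega
      obtain ⟨istar, histar⟩ := hsd
      have histar' : istar ∉ Finset.univ.image τh := (Finset.mem_sdiff.mp histar).2
      set fn : Option C → ↥R' := fun o => Option.elim o istar τh with hfn
      have hfninj : Function.Injective fn := by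
        intro o1 o2 h
        cases o1 with
        | none =>
          cases o2 with
          | none => rfl
          | some a =>
            exfalso
            apply histar'
            rw [show istar = τh a from h]
            exact Finset.mem_image_of_mem τh (Finset.mem_univ a)
        | some a =>
          cases o2 with
          | none =>
            exfalso
            apply histar'
            rw [show istar = τh a from h.symm]
            exact Finset.mem_image_of_mem τh (Finset.mem_univ a)
          | some b => exact congrArg some (hτhinj h)
      have hfnbij : Function.Bijective fn :=
        (Fintype.bijective_iff_injective_and_card fn).mpr
          ⟨hfninj, by rw [Fintype.card_option, hcardRh]⟩
      set β₀ : Option C ≃ ↥R' := Equiv.ofBijective fn hfnbij with hβ₀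
      set P : (Option C ≃ ↥R') → k := fun β => ∏ j', A (β (some j')).1 j' with hP
      set lamh : ↥R' → k := fun i => ∑ β : Option C ≃ ↥R', if β none = i then P β else 0
        with hlamh
      set F : C → (Option C ≃ ↥R') → k := fun j β => P β * A (β none).1 j with hF
      set V : C → k := fun j => ∑ β, F j β with hV
      have hVsum : ∀ j, ∑ i : ↥R', lamh i * A i.1 j = V j := by
        intro j
        calc ∑ i : ↥R', lamh i * A i.1 j
            = ∑ i : ↥R', ∑ β : Option C ≃ ↥R',
              (if β none = i then P β else 0) * A i.1 j := by
              exact Finset.sum_congr rfl fun i _ => Finset.sum_mul _ _ _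
          _ = ∑ β : Option C ≃ ↥R', ∑ i : ↥R',
              (if β none = i then P β else 0) * A i.1 j := Finset.sum_comm
          _ = ∑ β : Option C ≃ ↥R', ∑ i : ↥R',
              (if β none = i then P β * A i.1 j else 0) := by
              refine Finset.sum_congr rfl fun β _ => Finset.sum_congr rfl fun i _ => ?_
              split_ifs <;> simp [zero_mul]
          _ = ∑ β : Option C ≃ ↥R', if β none ∈ Finset.univ then P β * A (β none).1 j else 0 :=
              Finset.sum_congr rfl fun β _ =>
                Finset.sum_ite_eq Finset.univ (β none) (fun i => P β * A i.1 j)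
          _ = V j := Finset.sum_congr rfl fun β _ => by
                rw [if_pos (Finset.mem_univ _)]
      have hterm_le : ∀ (j : C) (i : ↥R'), tle (lamh i * A i.1 j) (V j) := by
        intro j i
        rw [← hVsum j]
        exact tle_sum (f := fun i : ↥R' => lamh i * A i.1 j) (Finset.mem_univ i)
      have key : ∀ (j : C) (β : Option C ≃ ↥R'), F j β = V j →
          lamh (β none) * A (β none).1 j = V j := by
        intro j β hβ
        have h1 : tle (P β) (lamh (β none)) := by
          have h2 := tle_sum (f := fun β' : Option C ≃ ↥R' =>
            if β' none = β none then P β' else 0) (Finset.mem_univ β)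
          have h2' : tle (if β none = β none then P β else 0) (lamh (β none)) := h2
          rwa [if_pos rfl] at h2'
        have h3 := tle_mul_right (A (β none).1 j) h1
        rw [show P β * A (β none).1 j = F j β from rfl, hβ] at h3
        exact tle_antisymm (hterm_le j (β none)) h3
      have hattain : ∀ (j : C) (i₀ : R), V j = 0 ∨
          ∃ i : ↥R', i.1 ≠ i₀ ∧ lamh i * A i.1 j = V j := by
        intro j i₀
        by_cases hVj : V j = 0
        · exact Or.inl hVj
        · right
          obtain ⟨β, -, hβ⟩ := sum_attained hto hVj
          have hβ' : F j β = V j := hβ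
          -- swap trick
          set β2 : Option C ≃ ↥R' := (Equiv.swap (none : Option C) (some j)).trans β with hβ2
          have hβ2none : β2 none = β (some j) := by
            show β ((Equiv.swap (none : Option C) (some j)) none) = β (some j)
            rw [Equiv.swap_apply_left]
          have hβ2somej : β2 (some j) = β none := by
            show β ((Equiv.swap (none : Option C) (some j)) (some j)) = β none
            rw [Equiv.swap_apply_right]
          have hβ2other : ∀ j' : C, j' ≠ j → β2 (some j') = β (some j') := by
            intro j' hj'
            show β ((Equiv.swap (none : Option C) (some j)) (some j')) = β (some j')
            rw [Equiv.swap_apply_of_ne_of_ne (by simp) (by simpa using hj')]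
          have hPβ : P β = A (β (some j)).1 j * ∏ j' ∈ Finset.univ.erase j,
              A (β (some j')).1 j' :=
            (Finset.mul_prod_erase Finset.univ (fun j' => A (β (some j')).1 j')
              (Finset.mem_univ j)).symm
          have hPβ2 : P β2 = A (β none).1 j * ∏ j' ∈ Finset.univ.erase j,
              A (β (some j')).1 j' := by
            rw [show P β2 = ∏ j', A (β2 (some j')).1 j' from rfl,
              ← Finset.mul_prod_erase Finset.univ (fun j' => A (β2 (some j')).1 j')
                (Finset.mem_univ j), hβ2somej]
            congr 1
            exact Finset.prod_congr rfl fun j' hj' => by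
              rw [hβ2other j' (Finset.mem_erase.mp hj').1]
          have hFβ2 : F j β2 = V j := by
            have : F j β2 = F j β := by
              show P β2 * A (β2 none).1 j = P β * A (β none).1 j
              rw [hβ2none, hPβ, hPβ2]
              ring
            rw [this, hβ']
          have h1 := key j β hβ'
          have h2 := key j β2 hFβ2
          rw [hβ2none] at h2
          have hne2 : (β none) ≠ (β (some j)) := by
            intro h
            exact Option.some_ne_none j (β.injective h).symm
          by_cases hc : (β none).1 ≠ i₀
          · exact ⟨β none, hc, h1⟩
          · push_neg at hc
            refine ⟨β (some j), ?_, h2⟩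
            intro h
            apply hne2
            apply Subtype.ext
            rw [h, hc]
      -- assemble lam on R
      set lam : R → k := fun i => if h : i ∈ R' then lamh ⟨i, h⟩ else 0 with hlam
      have hlam0 : ∀ i, i ∉ R' → lam i = 0 := fun i hi => dif_neg hi
      have hlamval : ∀ i : ↥R', lam i.1 = lamh i := fun i => by
        show (if h : i.1 ∈ R' then lamh ⟨i.1, h⟩ else 0) = lamh i
        rw [dif_pos i.2]
      refine ⟨lam, ⟨istar.1, ?_⟩, ?_⟩
      · -- lam is nonzero at istar
        rw [hlamval istar]
        have hterm := tle_sum (f := fun β : Option C ≃ ↥R' =>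
          if β none = istar then P β else 0) (Finset.mem_univ β₀)
        have hβ₀none : β₀ none = istar := rfl
        have hterm' : tle (if β₀ none = istar then P β₀ else 0) (lamh istar) := hterm
        rw [if_pos hβ₀none] at hterm'
        have hPβ₀ : P β₀ ≠ 0 := by
          have : ∀ j' : C, A (β₀ (some j')).1 j' = A (τ j') j' := fun j' => rfl
          rw [show P β₀ = ∏ j', A (β₀ (some j')).1 j' from rfl]
          refine Finset.prod_induction _ (fun x => x ≠ 0) (fun a b ha hb => mul_ne_zero' ha hb)
            h10 fun j' _ => by rw [this j']; exact hne j'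
        intro hcon
        rw [hcon] at hterm'
        exact hPβ₀ (tle_zero_eq hterm')
      · intro i₀ j
        have hfull : ∑ i, lam i * A i j = V j := by
          rw [sum_transfer (fun i => i ∈ R') lam (fun i => A i j) hlam0]
          rw [← hVsum j]
          refine Eq.trans (sum_univ_inst _ inferInstance _) ?_
          exact Finset.sum_congr rfl fun i _ => by rw [hlamval i]
        by_cases hi₀ : i₀ ∈ R'
        · -- transfer the erase-sum to ↥R'
          have hstep1 : ∑ i ∈ Finset.univ.erase i₀, lam i * A i j =
              ∑ i, Function.update lam i₀ 0 i * A i j := by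
            rw [sum_erase_eq_update (fun i => lam i * A i j) i₀]
            refine Finset.sum_congr rfl fun i _ => ?_
            by_cases h : i = i₀
            · subst h
              rw [Function.update_self, Function.update_self, zero_mul]
            · rw [Function.update_of_ne h, Function.update_of_ne h]
          have hstep2 : ∑ i, Function.update lam i₀ 0 i * A i j =
              ∑ i : ↥R', Function.update lamh ⟨i₀, hi₀⟩ 0 i * A i.1 j := by
            rw [sum_transfer (fun i => i ∈ R') _ (fun i => A i j) ?h0]
            case h0 =>
              intro i hi
              have : i ≠ i₀ := fun h => hi (h ▸ hi₀)
              rw [Function.update_of_ne this]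
              exact hlam0 i hi
            refine Eq.trans (sum_univ_inst _ inferInstance _) ?_
            refine Finset.sum_congr rfl fun i _ => ?_
            by_cases h : i = (⟨i₀, hi₀⟩ : ↥R')
            · subst h
              show Function.update lam i₀ 0 i₀ * A i₀ j =
                Function.update lamh ⟨i₀, hi₀⟩ 0 ⟨i₀, hi₀⟩ * A i₀ j
              rw [Function.update_self, Function.update_self]
            · have hne' : i.1 ≠ i₀ := fun hh => h (Subtype.ext hh)
              rw [Function.update_of_ne hne', Function.update_of_ne h, hlamval i]
          have hstep3 : ∑ i : ↥R', Function.update lamh ⟨i₀, hi₀⟩ 0 i * A i.1 j =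
              ∑ i ∈ Finset.univ.erase (⟨i₀, hi₀⟩ : ↥R'), lamh i * A i.1 j := by
            rw [sum_erase_eq_update (fun i : ↥R' => lamh i * A i.1 j) ⟨i₀, hi₀⟩]
            refine (Finset.sum_congr rfl fun i _ => ?_).symm
            by_cases h : i = (⟨i₀, hi₀⟩ : ↥R')
            · subst h
              rw [Function.update_self, Function.update_self, zero_mul]
            · rw [Function.update_of_ne h, Function.update_of_ne h]
          rw [hstep1, hstep2, hstep3, hfull]
          -- now show the erased sum over ↥R' equals V j
          rcases hattain j i₀ with hV0 | ⟨i, hine, hieq⟩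
          · rw [hV0]
            refine Finset.sum_eq_zero fun i _ => ?_
            have := hterm_le j i
            rw [hV0] at this
            exact tle_zero_eq this
          · have himem : i ∈ Finset.univ.erase (⟨i₀, hi₀⟩ : ↥R') :=
              Finset.mem_erase.mpr ⟨fun h => hine (congrArg Subtype.val h), Finset.mem_univ i⟩
            have hge : tle (V j) (∑ i' ∈ Finset.univ.erase (⟨i₀, hi₀⟩ : ↥R'),
                lamh i' * A i'.1 j) := by
              rw [← hieq]
              exact tle_sum (f := fun i' : ↥R' => lamh i' * A i'.1 j) himem
            have hle' : tle (∑ i' ∈ Finset.univ.erase (⟨i₀, hi₀⟩ : ↥R'),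
                lamh i' * A i'.1 j) (V j) :=
              sum_tle fun i' _ => hterm_le j i'
            exact tle_antisymm hle' hge
        · -- i₀ carries a zero coefficient
          rw [Finset.sum_erase _ (by rw [hlam0 i₀ hi₀, zero_mul])]
    · -- Hall case
      set t : C → Finset R := fun j => Finset.univ.filter (fun i : R => A i j ≠ 0) with ht
      have hhall : ¬ ∀ (s : Finset C), s.card ≤ (s.biUnion t).card := by
        intro h
        obtain ⟨f, hfinj, hf⟩ := (Finset.all_card_le_biUnion_card_iff_exists_injective t).mp h
        exact hτ ⟨f, hfinj, fun j => (Finset.mem_filter.mp (hf j)).2⟩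
      push_neg at hhall
      obtain ⟨B, hB⟩ := hhall
      have hBne : B.Nonempty := by
        rcases B.eq_empty_or_nonempty with rfl | h
        · simp at hB
        · exact h
      set NB : Finset R := B.biUnion t with hNB
      have hzeros : ∀ (i : R) (j : C), j ∈ B → i ∉ NB → A i j = 0 := by
        intro i j hj hi
        by_contra hA
        exact hi (Finset.mem_biUnion.mpr ⟨j, hj, Finset.mem_filter.mpr ⟨Finset.mem_univ i, hA⟩⟩)
      -- recurse on the smaller instance
      have hcardC2 : Fintype.card {j : C // j ∉ B} = Fintype.card C - B.card := by
        rw [Fintype.card_subtype_compl]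
        congr 1
        exact Fintype.card_coe B
      have hcardR2 : Fintype.card {i : R // i ∉ NB} = Fintype.card R - NB.card := by
        rw [Fintype.card_subtype_compl]
        congr 1
        exact Fintype.card_coe NB
      have hBcard : B.card ≤ Fintype.card C := B.card_le_univ.trans_eq (Finset.card_univ)
      have hNBcard : NB.card < B.card := hB
      have hrec1 : Fintype.card {j : C // j ∉ B} ≤ n := by
        rw [hcardC2]
        have : 1 ≤ B.card := Finset.card_pos.mpr hBne
        omega
      have hrec2 : Fintype.card {j : C // j ∉ B} < Fintype.card {i : R // i ∉ NB} := by
        rw [hcardC2, hcardR2]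
        omega
      obtain ⟨lam2, ⟨i2, hi2⟩, hlam2⟩ := ih hrec1 hrec2
        (fun (i : {i : R // i ∉ NB}) (j : {j : C // j ∉ B}) => A i.1 j.1)
      set lam : R → k := fun i => if h : i ∉ NB then lam2 ⟨i, h⟩ else 0 with hlam
      have hlam0 : ∀ i, i ∈ NB → lam i = 0 := fun i hi => dif_neg (not_not_intro hi)
      have hlamval : ∀ i : {i : R // i ∉ NB}, lam i.1 = lam2 i := fun i => by
        show (if h : i.1 ∉ NB then lam2 ⟨i.1, h⟩ else 0) = lam2 i
        rw [dif_pos i.2]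
      refine ⟨lam, ⟨i2.1, by rw [hlamval i2]; exact hi2⟩, ?_⟩
      intro i₀ j
      by_cases hj : j ∈ B
      · -- all terms vanish on columns of B
        have hzero : ∀ i : R, lam i * A i j = 0 := by
          intro i
          by_cases hi : i ∈ NB
          · rw [hlam0 i hi, zero_mul]
          · rw [hzeros i j hj hi, mul_zero]
        rw [Finset.sum_eq_zero fun i _ => hzero i, Finset.sum_eq_zero fun i _ => hzero i]
      · -- transfer to the recursive instance
        have hfull : ∑ i, lam i * A i j = ∑ i : {i : R // i ∉ NB}, lam2 i * A i.1 j := by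
          rw [sum_transfer (fun i => i ∉ NB) lam (fun i => A i j)
            (fun i hi => hlam0 i (not_not.mp hi))]
          refine Eq.trans (sum_univ_inst _ inferInstance _) ?_
          exact Finset.sum_congr rfl fun i _ => by rw [hlamval i]
        by_cases hi₀ : i₀ ∈ NB
        · rw [Finset.sum_erase _ (by rw [hlam0 i₀ hi₀, zero_mul])]
        · have hstep1 : ∑ i ∈ Finset.univ.erase i₀, lam i * A i j =
              ∑ i, Function.update lam i₀ 0 i * A i j := by
            rw [sum_erase_eq_update (fun i => lam i * A i j) i₀]
            refine Finset.sum_congr rfl fun i _ => ?_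
            by_cases h : i = i₀
            · subst h
              rw [Function.update_self, Function.update_self, zero_mul]
            · rw [Function.update_of_ne h, Function.update_of_ne h]
          have hstep2 : ∑ i, Function.update lam i₀ 0 i * A i j =
              ∑ i : {i : R // i ∉ NB}, Function.update lam2 ⟨i₀, hi₀⟩ 0 i * A i.1 j := by
            rw [sum_transfer (fun i => i ∉ NB) _ (fun i => A i j) ?h0]
            case h0 =>
              intro i hi
              have hiNB : i ∈ NB := not_not.mp hi
              have : i ≠ i₀ := fun h => hi₀ (h ▸ hiNB)
              rw [Function.update_of_ne this]
              exact hlam0 i hiNB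
            refine Eq.trans (sum_univ_inst _ inferInstance _) ?_
            refine Finset.sum_congr rfl fun i _ => ?_
            by_cases h : i = (⟨i₀, hi₀⟩ : {i : R // i ∉ NB})
            · subst h
              show Function.update lam i₀ 0 i₀ * A i₀ j =
                Function.update lam2 ⟨i₀, hi₀⟩ 0 ⟨i₀, hi₀⟩ * A i₀ j
              rw [Function.update_self, Function.update_self]
            · have hne' : i.1 ≠ i₀ := fun hh => h (Subtype.ext hh)
              rw [Function.update_of_ne hne', Function.update_of_ne h, hlamval i]
          have hstep3 : ∑ i : {i : R // i ∉ NB}, Function.update lam2 ⟨i₀, hi₀⟩ 0 i * A i.1 j =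
              ∑ i ∈ Finset.univ.erase (⟨i₀, hi₀⟩ : {i : R // i ∉ NB}), lam2 i * A i.1 j := by
            rw [sum_erase_eq_update (fun i : {i : R // i ∉ NB} => lam2 i * A i.1 j) ⟨i₀, hi₀⟩]
            refine (Finset.sum_congr rfl fun i _ => ?_).symm
            by_cases h : i = (⟨i₀, hi₀⟩ : {i : R // i ∉ NB})
            · subst h
              rw [Function.update_self, Function.update_self, zero_mul]
            · rw [Function.update_of_ne h, Function.update_of_ne h]
          rw [hstep1, hstep2, hstep3, hfull]
          exact hlam2 ⟨i₀, hi₀⟩ ⟨j, hj⟩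
  
end Dep

section MainLemma

variable {k : Type*} [TropSemifield k]
variable {X : Type*} [TropSemigroup X] [TropModule k X]

/-- If finitely many functionals separate the points of `X`, then `X` has at most that many
extremal rays. -/
theorem sep_bound (hto : TotallyOrderedTSF k) (h10 : (1:k) ≠ 0) (hXs : Straight X)
    {S : Finset X} (hext : ∀ s ∈ S, TExtremal s) (hinjtray : Set.InjOn (tray k) (↑S : Set X))
    {C : Type*} [Fintype C] (ξ : C → TropHom k X k)
    (hsep : ∀ v w : X, (∀ j, (ξ j).toFun v = (ξ j).toFun w) → v = w) :
    S.card ≤ Fintype.card C := by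
  classical
  by_contra hgt
  push_neg at hgt
  have hcards : Fintype.card C < Fintype.card ↥S := by
    rw [Fintype.card_coe]; exact hgt
  obtain ⟨lam, ⟨iw, hiw⟩, hlam⟩ := trop_dep hto h10 (Fintype.card C) le_rfl hcards
    (fun (i : ↥S) (j : C) => (ξ j).toFun i.1)
  set T : Finset ↥S := Finset.univ.filter (fun i => lam i ≠ 0) with hT
  have hTne : T.Nonempty := ⟨iw, Finset.mem_filter.mpr ⟨Finset.mem_univ iw, hiw⟩⟩
  obtain ⟨i₀, hi₀T, hmax⟩ := exists_tle_maximal hTne (fun i : ↥S => lam i • (i.1 : X))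
  have hlam₀ : lam i₀ ≠ 0 := (Finset.mem_filter.mp hi₀T).2
  set v : X := ∑ i, lam i • (i.1 : X) with hv
  set w : X := ∑ i ∈ Finset.univ.erase i₀, lam i • (i.1 : X) with hw
  have himg : ∀ j : C, (ξ j).toFun v = (ξ j).toFun w := by
    intro j
    have h1 : (ξ j).toFun v = ∑ i, lam i * (ξ j).toFun i.1 := by
      rw [hv, hom_sum]
      exact Finset.sum_congr rfl fun i _ => (ξ j).map_smul' _ _
    have h2 : (ξ j).toFun w = ∑ i ∈ Finset.univ.erase i₀, lam i * (ξ j).toFun i.1 := by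
      rw [hw, hom_sum]
      exact Finset.sum_congr rfl fun i _ => (ξ j).map_smul' _ _
    rw [h1, h2, hlam i₀ j]
  have hvw : v = w := hsep v w himg
  have hx_ext : TExtremal (lam i₀ • (i₀.1 : X)) :=
    extremal_smul hlam₀ (hext i₀.1 i₀.2)
  have hxw : tle (lam i₀ • (i₀.1 : X)) w := by
    rw [← hvw, hv]
    exact tle_sum (f := fun i : ↥S => lam i • (i.1 : X)) (Finset.mem_univ i₀)
  obtain ⟨i, hi, hxle⟩ := extremal_tle_sum hXs hx_ext hxw
  have hlami : lam i ≠ 0 := by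
    intro h0
    rw [h0, TropModule.zero_smul] at hxle
    exact hx_ext.1 (tle_zero_eq hxle)
  have hne : lam i₀ • (i₀.1 : X) ≠ lam i • (i.1 : X) := by
    intro heq
    have htray : tray k (i₀.1 : X) = tray k (i.1 : X) := by
      rw [← tray_smul hlam₀ (i₀.1 : X), ← tray_smul hlami (i.1 : X), heq]
    have := hinjtray i₀.2 i.2 htray
    exact (Finset.mem_erase.mp hi).1 (Subtype.ext this).symm
  exact hmax i (Finset.mem_filter.mpr ⟨Finset.mem_univ i, hlami⟩) ⟨hxle, hne⟩

end MainLemma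

theorem stmt2 {k M N : Type*} [TropSemifield k] [TropSemigroup M] [TropModule k M]
    [TropSemigroup N] [TropModule k N]
    (hto : TotallyOrderedTSF k) (hqc : QuasiCompleteTSF k) (hrat : RationalTSF k)
    (hMfg : TFG k M) (hNfg : TFG k N) (hMs : Straight M) (hNs : Straight N)
    (hMr : Function.Bijective (iotaFun k M)) (hNr : Function.Bijective (iotaFun k N))
    (α : TropHom k M N) (hinj : Function.Injective α.toFun) :
    tdim k M ≤ tdim k N ∧ (tdim k M = tdim k N → LightlySurjective α) := by
  classical
  have h10 : (1:k) ≠ 0 := by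
    obtain ⟨b, hb⟩ := hrat.2 0
    intro h
    apply hb.2
    calc (0:k) = 0 * b := (zero_mul b).symm
      _ = 1 * b := by rw [h]
      _ = b := one_mul b
  obtain ⟨SM, hSMgen, hSMext, hSMinj, hSMrays⟩ := exists_good_genset hto hMfg hMr.1
  obtain ⟨SN, hSNgen, hSNext, hSNinj, hSNrays⟩ := exists_good_genset hto hNfg hNr.1
  have hdimM : tdim k M = SM.card := tdim_eq_card hSMinj hSMrays
  have hdimN : tdim k N = SN.card := tdim_eq_card hSNinj hSNrays
  -- dual elements for the extremal generators of N
  have hDex : ∀ s : ↥SN, ∃ η : TropHom k N k,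
      ∀ (a : k) (v : N), tle (a • (s : N)) v ↔ tle a (η.toFun v) := fun s =>
    exists_dual hto hqc hNs hNr.1 (hSNext s.1 s.2)
  choose D hD using hDex
  have hrecon : ∀ v : N, v = ∑ s ∈ SN.attach, ((D s).toFun v) • (s : N) := recon hSNgen D hD
  -- the composite functionals on M
  set ξ : ↥SN → TropHom k M k := fun j =>
    ⟨fun v => (D j).toFun (α.toFun v),
      by show (D j).toFun (α.toFun 0) = 0; rw [α.map_zero', (D j).map_zero'],
      fun v w => by
        show (D j).toFun (α.toFun (v + w)) = _
        rw [α.map_add', (D j).map_add'],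
      fun a v => by
        show (D j).toFun (α.toFun (a • v)) = _
        rw [α.map_smul', (D j).map_smul']⟩ with hξ
  have hsep : ∀ v w : M, (∀ j : ↥SN, (ξ j).toFun v = (ξ j).toFun w) → v = w := by
    intro v w h
    apply hinj
    rw [hrecon (α.toFun v), hrecon (α.toFun w)]
    exact Finset.sum_congr rfl fun s _ => by
      have hs : (D s).toFun (α.toFun v) = (D s).toFun (α.toFun w) := h s
      rw [hs]
  constructor
  · -- dimension inequality
    rw [hdimM, hdimN]
    have hb := sep_bound hto h10 hMs hSMext hSMinj ξ hsep
    rwa [Fintype.card_coe] at hb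
  · -- light surjectivity in case of equal dimensions
    intro heq
    rw [hdimM, hdimN] at heq
    -- no functional of the family vanishes identically on the image of α
    have hrow : ∀ j : ↥SN, ∃ v : M, (D j).toFun (α.toFun v) ≠ 0 := by
      by_contra hcon
      push_neg at hcon
      obtain ⟨j₀, hj₀⟩ := hcon
      have hsep2 : ∀ v w : M,
          (∀ j : {j : ↥SN // j ≠ j₀}, (ξ j.1).toFun v = (ξ j.1).toFun w) → v = w := by
        intro v w h
        apply hsep
        intro j
        by_cases hj : j = j₀
        · show (D j).toFun (α.toFun v) = (D j).toFun (α.toFun w)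
          rw [hj, hj₀ v, hj₀ w]
        · exact h ⟨j, hj⟩
      have hbound := sep_bound hto h10 hMs hSMext hSMinj
        (fun j : {j : ↥SN // j ≠ j₀} => ξ j.1) hsep2
      have hcard2 : Fintype.card {j : ↥SN // j ≠ j₀} = SN.card - 1 := by
        have h1 : Fintype.card {j : ↥SN // ¬ j = j₀} =
            Fintype.card ↥SN - Fintype.card {j : ↥SN // j = j₀} :=
          Fintype.card_subtype_compl _
        rw [h1, Fintype.card_coe, Fintype.card_subtype_eq]
      rw [hcard2] at hbound
      have hSNpos : 0 < SN.card := Finset.card_pos.mpr ⟨j₀.1, j₀.2⟩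
      omega
    choose vj hvj using hrow
    intro w
    set coef : ↥SN → k := fun j =>
      (D j).toFun w * tinv ((D j).toFun (α.toFun (vj j))) with hcoef
    refine ⟨∑ j ∈ SN.attach, coef j • vj j, ?_⟩
    have hαv : α.toFun (∑ j ∈ SN.attach, coef j • vj j) =
        ∑ j ∈ SN.attach, coef j • α.toFun (vj j) := by
      rw [hom_sum α]
      exact Finset.sum_congr rfl fun j _ => α.map_smul' _ _
    have hcoord : ∀ j : ↥SN, tle ((D j).toFun w)
        ((D j).toFun (α.toFun (∑ j' ∈ SN.attach, coef j' • vj j'))) := by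
      intro j
      have h1 : (D j).toFun (α.toFun (∑ j' ∈ SN.attach, coef j' • vj j')) =
          ∑ j' ∈ SN.attach, coef j' * (D j).toFun (α.toFun (vj j')) := by
        rw [hαv, hom_sum (D j)]
        exact Finset.sum_congr rfl fun j' _ => (D j).map_smul' _ _
      have h2 : coef j * (D j).toFun (α.toFun (vj j)) = (D j).toFun w := by
        show ((D j).toFun w * tinv ((D j).toFun (α.toFun (vj j)))) *
          (D j).toFun (α.toFun (vj j)) = (D j).toFun w
        rw [mul_assoc, mul_comm (tinv ((D j).toFun (α.toFun (vj j))))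
          ((D j).toFun (α.toFun (vj j))), mul_tinv (hvj j), mul_one]
      rw [h1, ← h2]
      exact tle_sum (f := fun j' => coef j' * (D j).toFun (α.toFun (vj j')))
        (SN.mem_attach j)
    have h3 : tle (∑ s ∈ SN.attach, ((D s).toFun w) • (s : N))
        (∑ s ∈ SN.attach,
          ((D s).toFun (α.toFun (∑ j' ∈ SN.attach, coef j' • vj j'))) • (s : N)) :=
      sum_tle_sum fun s _ => tle_smul_left _ (hcoord s)
    rw [← hrecon w, ← hrecon (α.toFun (∑ j' ∈ SN.attach, coef j' • vj j'))] at h3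
    exact h3
end
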